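/- arXiv:cs/0407058 — 4 statements merged into one kernel-verified Lean document; each statement's English description precedes it below -/
import Mathlib

section
/- Let P be a finite set of points in the plane ℝ² and let k be an integer with 2 ≤ k ≤ |P|. Let OPT = min{ w(T) : T ⊆ P, |T| = k }. Then there exists a point c ∈ ℝ² whose x-coordinate is the x-coordinate of some point of P and whose y-coordinate is the y-coordinate of some point of P, such that EVERY subset S ⊆ P with |S| = k that is a set of k nearest points of P to c satisfies w(S) ≤ (7/4)·OPT. (This is the approximation guarantee of the Manhattan Median algorithm MM on 2D point sets.) -/
open Finset

/-- The L1 (Manhattan) distance between two points of the plane. -/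
noncomputable def dist1 (p q : Fin 2 → ℝ) : ℝ := ∑ i, |p i - q i|

/-- The sum of L1 distances over all unordered pairs of distinct points of `S`. -/
noncomputable def w (S : Finset (Fin 2 → ℝ)) : ℝ := (∑ p ∈ S, ∑ q ∈ S, dist1 p q) / 2

namespace MM74

lemma dist1_expand (p q : Fin 2 → ℝ) : dist1 p q = |p 0 - q 0| + |p 1 - q 1| := by
  simp [dist1, Fin.sum_univ_two]

lemma dist1_nonneg (p q : Fin 2 → ℝ) : 0 ≤ dist1 p q := by
  rw [dist1_expand]; positivity

lemma abs_dist1_sub (c p q : Fin 2 → ℝ) : |dist1 p c - dist1 q c| ≤ dist1 p q := by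
  rw [dist1_expand, dist1_expand, dist1_expand]
  have a1 : |p 0 - c 0| - |q 0 - c 0| ≤ |p 0 - q 0| := by
    have h := abs_sub_abs_le_abs_sub (p 0 - c 0) (q 0 - c 0)
    have e : (p 0 - c 0) - (q 0 - c 0) = p 0 - q 0 := by ring
    rwa [e] at h
  have a2 : |q 0 - c 0| - |p 0 - c 0| ≤ |p 0 - q 0| := by
    have h := abs_sub_abs_le_abs_sub (q 0 - c 0) (p 0 - c 0)
    have e : (q 0 - c 0) - (p 0 - c 0) = q 0 - p 0 := by ring
    rw [e] at h
    rw [abs_sub_comm (p 0) (q 0)]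
    exact h
  have b1 : |p 1 - c 1| - |q 1 - c 1| ≤ |p 1 - q 1| := by
    have h := abs_sub_abs_le_abs_sub (p 1 - c 1) (q 1 - c 1)
    have e : (p 1 - c 1) - (q 1 - c 1) = p 1 - q 1 := by ring
    rwa [e] at h
  have b2 : |q 1 - c 1| - |p 1 - c 1| ≤ |p 1 - q 1| := by
    have h := abs_sub_abs_le_abs_sub (q 1 - c 1) (p 1 - c 1)
    have e : (q 1 - c 1) - (p 1 - c 1) = q 1 - p 1 := by ring
    rw [e] at h
    rw [abs_sub_comm (p 1) (q 1)]
    exact h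
  rw [abs_sub_le_iff]
  constructor <;> linarith

lemma coord_pair (a b : ℝ) :
    |a - b| ≤ |a| + |b| - 2 * (if (decide (0 ≤ a) = decide (0 ≤ b)) then min |a| |b| else 0) := by
  by_cases ha : 0 ≤ a <;> by_cases hb : 0 ≤ b
  · rw [if_pos (by simp [ha, hb]), abs_of_nonneg ha, abs_of_nonneg hb]
    rcases le_total a b with h | h
    · rw [abs_of_nonpos (by linarith), min_eq_left h]; linarith
    · rw [abs_of_nonneg (by linarith), min_eq_right h]; linarith
  · rw [if_neg (by simp [ha, hb])]
    have h := abs_add_le a (-b)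
    rw [abs_neg] at h
    have e : a + -b = a - b := by ring
    rw [e] at h; linarith
  · rw [if_neg (by simp [ha, hb])]
    have h := abs_add_le a (-b)
    rw [abs_neg] at h
    have e : a + -b = a - b := by ring
    rw [e] at h; linarith
  · rw [if_pos (by simp [ha, hb]), abs_of_neg (lt_of_not_ge ha), abs_of_neg (lt_of_not_ge hb)]
    rcases le_total a b with h | h
    · rw [abs_of_nonpos (by linarith), min_eq_right (by linarith)]; linarith
    · rw [abs_of_nonneg (by linarith), min_eq_left (by linarith)]; linarith

lemma prod_le_min {t u : ℝ} (ht : 0 ≤ t) (ht1 : t ≤ 1) (hu : 0 ≤ u) (hu1 : u ≤ 1) :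
    t * u ≤ min t u := by
  rcases le_total t u with h | h
  · rw [min_eq_left h]; nlinarith
  · rw [min_eq_right h]; nlinarith

lemma min_sub_min (a b u v : ℝ) : min (a - u) (b - v) + min u v ≤ min a b := by
  apply le_min
  · linarith [min_le_left (a - u) (b - v), min_le_left u v]
  · linarith [min_le_right (a - u) (b - v), min_le_right u v]

lemma mul_min_eq (δ a b : ℝ) (hδ : 0 ≤ δ) : δ * min a b = min (δ * a) (δ * b) := by
  rcases le_total a b with h | h
  · rw [min_eq_left h, min_eq_left (by nlinarith)]
  · rw [min_eq_right h, min_eq_right (by nlinarith)]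

lemma sq_block {ι : Type*} [DecidableEq ι] (I : Finset ι) (f : ι → ℝ) (ζ : ι → Bool)
    (h0 : ∀ i ∈ I, 0 ≤ f i) (h1 : ∀ i ∈ I, f i ≤ 1) :
    (∑ i ∈ I.filter (fun i => ζ i = true), f i) ^ 2
      + (∑ i ∈ I.filter (fun i => ζ i = false), f i) ^ 2
      ≤ ∑ i ∈ I, ∑ j ∈ I, (if ζ i = ζ j then min (f i) (f j) else 0) := by
  classical
  have hnn : ∀ i ∈ I, ∀ j ∈ I, 0 ≤ (if ζ i = ζ j then min (f i) (f j) else 0) := by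
    intro i hi j hj
    split_ifs
    · exact le_min (h0 i hi) (h0 j hj)
    · exact le_refl 0
  have key : ∀ b : Bool, (∑ i ∈ I.filter (fun i => ζ i = b), f i) ^ 2
      ≤ ∑ i ∈ I.filter (fun i => ζ i = b), ∑ j ∈ I, (if ζ i = ζ j then min (f i) (f j) else 0) := by
    intro b
    have h1' : (∑ i ∈ I.filter (fun i => ζ i = b), f i) ^ 2
        ≤ ∑ i ∈ I.filter (fun i => ζ i = b), ∑ j ∈ I.filter (fun i => ζ i = b), min (f i) (f j) := by
      rw [sq, Finset.sum_mul_sum]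
      refine Finset.sum_le_sum fun i hi => Finset.sum_le_sum fun j hj => ?_
      have hi' := Finset.mem_filter.mp hi
      have hj' := Finset.mem_filter.mp hj
      exact prod_le_min (h0 i hi'.1) (h1 i hi'.1) (h0 j hj'.1) (h1 j hj'.1)
    refine h1'.trans (Finset.sum_le_sum fun i hi => ?_)
    have hi' := Finset.mem_filter.mp hi
    have e1 : ∑ j ∈ I.filter (fun i => ζ i = b), min (f i) (f j)
        = ∑ j ∈ I.filter (fun i => ζ i = b), (if ζ i = ζ j then min (f i) (f j) else 0) := by
      refine Finset.sum_congr rfl fun j hj => ?_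
      have hj' := Finset.mem_filter.mp hj
      rw [if_pos (by rw [hi'.2, hj'.2])]
    rw [e1]
    exact Finset.sum_le_sum_of_subset_of_nonneg (Finset.filter_subset _ _)
      (fun j hj _ => hnn i hi'.1 j hj)
  have split : ∑ i ∈ I.filter (fun i => ζ i = true), (∑ j ∈ I, (if ζ i = ζ j then min (f i) (f j) else 0))
      + ∑ i ∈ I.filter (fun i => ζ i = false), (∑ j ∈ I, (if ζ i = ζ j then min (f i) (f j) else 0))
      = ∑ i ∈ I, ∑ j ∈ I, (if ζ i = ζ j then min (f i) (f j) else 0) := by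
    have h := Finset.sum_filter_add_sum_filter_not I (fun i => ζ i = true)
      (fun i => ∑ j ∈ I, (if ζ i = ζ j then min (f i) (f j) else 0))
    have e : I.filter (fun i => ¬(ζ i = true)) = I.filter (fun i => ζ i = false) := by
      ext i; simp
    rw [e] at h; exact h
  calc (∑ i ∈ I.filter (fun i => ζ i = true), f i) ^ 2
        + (∑ i ∈ I.filter (fun i => ζ i = false), f i) ^ 2
      ≤ ∑ i ∈ I.filter (fun i => ζ i = true), (∑ j ∈ I, (if ζ i = ζ j then min (f i) (f j) else 0))
        + ∑ i ∈ I.filter (fun i => ζ i = false), (∑ j ∈ I, (if ζ i = ζ j then min (f i) (f j) else 0)) :=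
        add_le_add (key true) (key false)
    _ = _ := split

lemma level {ι : Type*} [DecidableEq ι] (I : Finset ι) (t s : ι → ℝ) (ξ η : ι → Bool)
    (h : ∀ i ∈ I, 0 ≤ t i ∧ 0 ≤ s i ∧ t i + s i = 1) :
    (I.card : ℝ) ^ 2
      ≤ 4 * ∑ i ∈ I, ∑ j ∈ I,
          ((if ξ i = ξ j then min (t i) (t j) else 0) + (if η i = η j then min (s i) (s j) else 0)) := by
  classical
  have ht0 : ∀ i ∈ I, 0 ≤ t i := fun i hi => (h i hi).1
  have hs0 : ∀ i ∈ I, 0 ≤ s i := fun i hi => (h i hi).2.1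
  have ht1 : ∀ i ∈ I, t i ≤ 1 := fun i hi => by have := h i hi; linarith [this.2.1, this.2.2]
  have hs1 : ∀ i ∈ I, s i ≤ 1 := fun i hi => by have := h i hi; linarith [this.1, this.2.2]
  have hA := sq_block I t ξ ht0 ht1
  have hB := sq_block I s η hs0 hs1
  have hsplit : ∑ i ∈ I, ∑ j ∈ I,
      ((if ξ i = ξ j then min (t i) (t j) else 0) + (if η i = η j then min (s i) (s j) else 0))
      = (∑ i ∈ I, ∑ j ∈ I, (if ξ i = ξ j then min (t i) (t j) else 0))
        + (∑ i ∈ I, ∑ j ∈ I, (if η i = η j then min (s i) (s j) else 0)) := by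
    rw [← Finset.sum_add_distrib]
    exact Finset.sum_congr rfl fun i _ => by rw [← Finset.sum_add_distrib]
  have hcard : (I.card : ℝ) = (∑ i ∈ I.filter (fun i => ξ i = true), t i)
      + (∑ i ∈ I.filter (fun i => ξ i = false), t i)
      + ((∑ i ∈ I.filter (fun i => η i = true), s i)
      + (∑ i ∈ I.filter (fun i => η i = false), s i)) := by
    have e1 : ∑ i ∈ I.filter (fun i => ξ i = true), t i + ∑ i ∈ I.filter (fun i => ξ i = false), t i
        = ∑ i ∈ I, t i := by
      have h := Finset.sum_filter_add_sum_filter_not I (fun i => ξ i = true) t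
      have e : I.filter (fun i => ¬(ξ i = true)) = I.filter (fun i => ξ i = false) := by ext i; simp
      rw [e] at h; exact h
    have e2 : ∑ i ∈ I.filter (fun i => η i = true), s i + ∑ i ∈ I.filter (fun i => η i = false), s i
        = ∑ i ∈ I, s i := by
      have h := Finset.sum_filter_add_sum_filter_not I (fun i => η i = true) s
      have e : I.filter (fun i => ¬(η i = true)) = I.filter (fun i => η i = false) := by ext i; simp
      rw [e] at h; exact h
    rw [e1, e2, ← Finset.sum_add_distrib]
    rw [Finset.sum_congr rfl (fun i hi => (h i hi).2.2)]
    simp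
  rw [hsplit]
  set A1 := ∑ i ∈ I.filter (fun i => ξ i = true), t i
  set A2 := ∑ i ∈ I.filter (fun i => ξ i = false), t i
  set B1 := ∑ i ∈ I.filter (fun i => η i = true), s i
  set B2 := ∑ i ∈ I.filter (fun i => η i = false), s i
  rw [hcard]
  nlinarith [hA, hB, sq_nonneg (A1 - A2), sq_nonneg (A1 - B1), sq_nonneg (A1 - B2),
    sq_nonneg (A2 - B1), sq_nonneg (A2 - B2), sq_nonneg (B1 - B2)]

section genray
variable {ι : Type*} [DecidableEq ι]

/-- the right-hand side pair weight -/
noncomputable def epair (x y : ι → ℝ) (ξ η : ι → Bool) (i j : ι) : ℝ :=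
  (if ξ i = ξ j then min (x i) (x j) else 0) + (if η i = η j then min (y i) (y j) else 0)

lemma epair_nonneg (x y : ι → ℝ) (ξ η : ι → Bool) {i j : ι}
    (hxi : 0 ≤ x i) (hxj : 0 ≤ x j) (hyi : 0 ≤ y i) (hyj : 0 ≤ y j) :
    0 ≤ epair x y ξ η i j := by
  unfold epair
  have h1 : (0:ℝ) ≤ (if ξ i = ξ j then min (x i) (x j) else 0) := by
    split_ifs
    · exact le_min hxi hxj
    · exact le_refl 0
  have h2 : (0:ℝ) ≤ (if η i = η j then min (y i) (y j) else 0) := by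
    split_ifs
    · exact le_min hyi hyj
    · exact le_refl 0
  linarith

lemma drop_zero (I : Finset ι) (x y : ι → ℝ) (ξ η : ι → Bool) (i₀ : ι) (hi₀ : i₀ ∈ I)
    (hx : ∀ i ∈ I, 0 ≤ x i) (hy : ∀ i ∈ I, 0 ≤ y i) (hx0 : x i₀ = 0) (hy0 : y i₀ = 0)
    (h : ∑ i ∈ I.erase i₀, ∑ j ∈ I.erase i₀, min (x i + y i) (x j + y j)
        ≤ 4 * ∑ i ∈ I.erase i₀, ∑ j ∈ I.erase i₀, epair x y ξ η i j) :
    ∑ i ∈ I, ∑ j ∈ I, min (x i + y i) (x j + y j)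
      ≤ 4 * ∑ i ∈ I, ∑ j ∈ I, epair x y ξ η i j := by
  have hd : ∀ i ∈ I, 0 ≤ x i + y i := fun i hi => by linarith [hx i hi, hy i hi]
  have hL : ∑ i ∈ I, ∑ j ∈ I, min (x i + y i) (x j + y j)
      = ∑ i ∈ I.erase i₀, ∑ j ∈ I.erase i₀, min (x i + y i) (x j + y j) := by
    rw [← Finset.sum_erase_add I _ hi₀]
    have hrow : ∑ j ∈ I, min (x i₀ + y i₀) (x j + y j) = 0 := by
      refine Finset.sum_eq_zero fun j hj => ?_
      rw [hx0, hy0, add_zero]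
      exact min_eq_left (hd j hj)
    rw [hrow, add_zero]
    refine Finset.sum_congr rfl fun i hi => ?_
    rw [← Finset.sum_erase_add I _ hi₀, hx0, hy0, add_zero]
    have : min (x i + y i) 0 = 0 := min_eq_right (hd i (Finset.mem_of_mem_erase hi))
    rw [this, add_zero]
  have hR : ∑ i ∈ I.erase i₀, ∑ j ∈ I.erase i₀, epair x y ξ η i j
      ≤ ∑ i ∈ I, ∑ j ∈ I, epair x y ξ η i j := by
    have inner : ∀ i ∈ I.erase i₀, ∑ j ∈ I.erase i₀, epair x y ξ η i j
        ≤ ∑ j ∈ I, epair x y ξ η i j := by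
      intro i hi
      refine Finset.sum_le_sum_of_subset_of_nonneg (Finset.erase_subset _ _) fun j hj _ => ?_
      have hiI := Finset.mem_of_mem_erase hi
      exact epair_nonneg x y ξ η (hx i hiI) (hx j hj) (hy i hiI) (hy j hj)
    calc ∑ i ∈ I.erase i₀, ∑ j ∈ I.erase i₀, epair x y ξ η i j
        ≤ ∑ i ∈ I.erase i₀, ∑ j ∈ I, epair x y ξ η i j := Finset.sum_le_sum inner
      _ ≤ ∑ i ∈ I, ∑ j ∈ I, epair x y ξ η i j := by
          refine Finset.sum_le_sum_of_subset_of_nonneg (Finset.erase_subset _ _) fun i hi _ => ?_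
          exact Finset.sum_nonneg fun j hj =>
            epair_nonneg x y ξ η (hx i hi) (hx j hj) (hy i hi) (hy j hj)
  rw [hL]
  calc ∑ i ∈ I.erase i₀, ∑ j ∈ I.erase i₀, min (x i + y i) (x j + y j)
      ≤ 4 * ∑ i ∈ I.erase i₀, ∑ j ∈ I.erase i₀, epair x y ξ η i j := h
    _ ≤ 4 * ∑ i ∈ I, ∑ j ∈ I, epair x y ξ η i j := by linarith [hR]

lemma genray :
    ∀ (n : ℕ) (I : Finset ι) (x y : ι → ℝ) (ξ η : ι → Bool),
      I.card ≤ n → (∀ i ∈ I, 0 ≤ x i) → (∀ i ∈ I, 0 ≤ y i) →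
      ∑ i ∈ I, ∑ j ∈ I, min (x i + y i) (x j + y j)
        ≤ 4 * ∑ i ∈ I, ∑ j ∈ I, epair x y ξ η i j := by
  intro n
  induction n with
  | zero =>
      intro I x y ξ η hcard hx hy
      have : I = ∅ := Finset.card_eq_zero.mp (Nat.le_zero.mp hcard)
      subst this
      simp
  | succ n ih =>
      intro I x y ξ η hcard hx hy
      rcases I.eq_empty_or_nonempty with rfl | hne
      · simp
      obtain ⟨i₀, hi₀, hmin⟩ := I.exists_min_image (fun i => x i + y i) hne
      set δ : ℝ := x i₀ + y i₀ with hδdef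
      have hδ0 : 0 ≤ δ := by have := hx i₀ hi₀; have := hy i₀ hi₀; linarith
      set t : ι → ℝ := fun i => x i / (x i + y i) with htdef
      set s : ι → ℝ := fun i => y i / (x i + y i) with hsdef
      set x' : ι → ℝ := fun i => x i - δ * t i with hx'def
      set y' : ι → ℝ := fun i => y i - δ * s i with hy'def
      -- basic facts
      have hdmin : ∀ i ∈ I, δ ≤ x i + y i := fun i hi => hmin i hi
      have hfacts : ∀ i ∈ I, 0 ≤ x' i ∧ 0 ≤ y' i ∧ x' i + y' i = (x i + y i) - δ
          ∧ 0 ≤ t i ∧ 0 ≤ s i := by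
        intro i hi
        have hxi := hx i hi
        have hyi := hy i hi
        have hdi := hdmin i hi
        by_cases hd : x i + y i = 0
        · have hδz : δ = 0 := le_antisymm (by linarith) hδ0
          have hxz : x i = 0 := by linarith
          have hyz : y i = 0 := by linarith
          have ht : t i = 0 := by rw [htdef]; simp [hd]
          have hs : s i = 0 := by rw [hsdef]; simp [hd]
          refine ⟨?_, ?_, ?_, ?_, ?_⟩ <;>
            simp [hx'def, hy'def, ht, hs, hxz, hyz, hδz, hd]
        · have hdpos : 0 < x i + y i := lt_of_le_of_ne (by linarith) (Ne.symm hd)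
          have ht0 : 0 ≤ t i := div_nonneg hxi (le_of_lt hdpos)
          have hs0 : 0 ≤ s i := div_nonneg hyi (le_of_lt hdpos)
          have hx'e : x' i = x i * ((x i + y i - δ) / (x i + y i)) := by
            rw [hx'def, htdef]; field_simp
          have hy'e : y' i = y i * ((x i + y i - δ) / (x i + y i)) := by
            rw [hy'def, hsdef]; field_simp
          have hfrac : 0 ≤ (x i + y i - δ) / (x i + y i) :=
            div_nonneg (by linarith) (le_of_lt hdpos)
          refine ⟨by rw [hx'e]; exact mul_nonneg hxi hfrac,
                  by rw [hy'e]; exact mul_nonneg hyi hfrac, ?_, ht0, hs0⟩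
          rw [hx'def, hy'def, htdef, hsdef]
          field_simp
      have hx' : ∀ i ∈ I, 0 ≤ x' i := fun i hi => (hfacts i hi).1
      have hy' : ∀ i ∈ I, 0 ≤ y' i := fun i hi => (hfacts i hi).2.1
      have hsum' : ∀ i ∈ I, x' i + y' i = (x i + y i) - δ := fun i hi => (hfacts i hi).2.2.1
      -- the scaled configuration vanishes at i₀
      have hx'0 : x' i₀ = 0 := by
        by_cases hd : x i₀ + y i₀ = 0
        · have hxz : x i₀ = 0 := by have := hx i₀ hi₀; have := hy i₀ hi₀; linarith
          have ht : t i₀ = 0 := by rw [htdef]; simp [hd]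
          rw [hx'def]; simp [ht, hxz]
        · rw [hx'def, htdef, hδdef]
          field_simp
          ring
      have hy'0 : y' i₀ = 0 := by
        by_cases hd : x i₀ + y i₀ = 0
        · have hyz : y i₀ = 0 := by have := hx i₀ hi₀; have := hy i₀ hi₀; linarith
          have hs : s i₀ = 0 := by rw [hsdef]; simp [hd]
          rw [hy'def]; simp [hs, hyz]
        · rw [hy'def, hsdef, hδdef]
          field_simp
          ring
      -- LHS layer decomposition
      have hLHS : ∑ i ∈ I, ∑ j ∈ I, min (x i + y i) (x j + y j)
          = (∑ i ∈ I, ∑ j ∈ I, min (x' i + y' i) (x' j + y' j)) + (I.card : ℝ)^2 * δ := by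
        have hpt : ∀ i ∈ I, ∀ j ∈ I, min (x i + y i) (x j + y j)
            = min (x' i + y' i) (x' j + y' j) + δ := by
          intro i hi j hj
          rw [hsum' i hi, hsum' j hj, min_sub_sub_right]
          ring
        rw [Finset.sum_congr rfl fun i hi => Finset.sum_congr rfl fun j hj => hpt i hi j hj]
        rw [Finset.sum_congr rfl fun i (hi : i ∈ I) => Finset.sum_add_distrib]
        rw [Finset.sum_add_distrib]
        simp [Finset.sum_const, nsmul_eq_mul]
        ring
      -- RHS pair decomposition
      have hpairsum : (∑ i ∈ I, ∑ j ∈ I, epair x' y' ξ η i j)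
            + δ * (∑ i ∈ I, ∑ j ∈ I, epair t s ξ η i j)
          ≤ ∑ i ∈ I, ∑ j ∈ I, epair x y ξ η i j := by
        have hpt : ∀ i ∈ I, ∀ j ∈ I,
            epair x' y' ξ η i j + δ * epair t s ξ η i j ≤ epair x y ξ η i j := by
          intro i hi j hj
          unfold epair
          have hxpart : (if ξ i = ξ j then min (x' i) (x' j) else 0)
              + δ * (if ξ i = ξ j then min (t i) (t j) else 0)
              ≤ (if ξ i = ξ j then min (x i) (x j) else 0) := by
            split_ifs
            · rw [mul_min_eq δ (t i) (t j) hδ0]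
              have h1 : x' i = x i - δ * t i := rfl
              have h2 : x' j = x j - δ * t j := rfl
              rw [h1, h2]
              exact min_sub_min (x i) (x j) (δ * t i) (δ * t j)
            · simp
          have hypart : (if η i = η j then min (y' i) (y' j) else 0)
              + δ * (if η i = η j then min (s i) (s j) else 0)
              ≤ (if η i = η j then min (y i) (y j) else 0) := by
            split_ifs
            · rw [mul_min_eq δ (s i) (s j) hδ0]
              have h1 : y' i = y i - δ * s i := rfl
              have h2 : y' j = y j - δ * s j := rfl
              rw [h1, h2]
              exact min_sub_min (y i) (y j) (δ * s i) (δ * s j)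
            · simp
          linarith
        calc (∑ i ∈ I, ∑ j ∈ I, epair x' y' ξ η i j)
              + δ * (∑ i ∈ I, ∑ j ∈ I, epair t s ξ η i j)
            = ∑ i ∈ I, ∑ j ∈ I, (epair x' y' ξ η i j + δ * epair t s ξ η i j) := by
              rw [Finset.mul_sum]
              rw [← Finset.sum_add_distrib]
              refine Finset.sum_congr rfl fun i hi => ?_
              rw [Finset.mul_sum, ← Finset.sum_add_distrib]
          _ ≤ ∑ i ∈ I, ∑ j ∈ I, epair x y ξ η i j :=
              Finset.sum_le_sum fun i hi => Finset.sum_le_sum fun j hj => hpt i hi j hj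
      -- level inequality scaled by δ
      have hlevel : (I.card : ℝ)^2 * δ ≤ 4 * (δ * (∑ i ∈ I, ∑ j ∈ I, epair t s ξ η i j)) := by
        rcases eq_or_lt_of_le hδ0 with hz | hpos
        · rw [← hz]; simp
        · have hts : ∀ i ∈ I, 0 ≤ t i ∧ 0 ≤ s i ∧ t i + s i = 1 := by
            intro i hi
            have hdi := hdmin i hi
            have hdpos : 0 < x i + y i := lt_of_lt_of_le hpos hdi
            refine ⟨div_nonneg (hx i hi) (le_of_lt hdpos),
                    div_nonneg (hy i hi) (le_of_lt hdpos), ?_⟩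
            rw [htdef, hsdef]
            field_simp
          have := level I t s ξ η hts
          unfold epair
          nlinarith [this]
      -- IH applied after dropping the zero point
      have hIH : ∑ i ∈ I, ∑ j ∈ I, min (x' i + y' i) (x' j + y' j)
          ≤ 4 * ∑ i ∈ I, ∑ j ∈ I, epair x' y' ξ η i j := by
        refine drop_zero I x' y' ξ η i₀ hi₀ hx' hy' hx'0 hy'0 ?_
        refine ih (I.erase i₀) x' y' ξ η ?_ ?_ ?_
        · rw [Finset.card_erase_of_mem hi₀]
          omega
        · exact fun i hi => hx' i (Finset.mem_of_mem_erase hi)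
        · exact fun i hi => hy' i (Finset.mem_of_mem_erase hi)
      rw [hLHS]
      calc (∑ i ∈ I, ∑ j ∈ I, min (x' i + y' i) (x' j + y' j)) + (I.card : ℝ)^2 * δ
          ≤ 4 * (∑ i ∈ I, ∑ j ∈ I, epair x' y' ξ η i j)
            + 4 * (δ * (∑ i ∈ I, ∑ j ∈ I, epair t s ξ η i j)) := by linarith [hIH, hlevel]
        _ ≤ 4 * ∑ i ∈ I, ∑ j ∈ I, epair x y ξ η i j := by linarith [hpairsum]

end genray

lemma oneDmed {ι : Type*} [DecidableEq ι] (I : Finset ι) (g : ι → ℝ)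
    (h1 : I.card ≤ 2 * (I.filter fun i => g i ≤ 0).card)
    (h2 : I.card ≤ 2 * (I.filter fun i => 0 ≤ g i).card) :
    (I.card : ℝ) * ∑ i ∈ I, |g i| ≤ ∑ i ∈ I, ∑ j ∈ I, |g i - g j| := by
  classical
  set cond : ι → ι → Prop := fun i j => (0 < g i ∧ g j ≤ 0) ∨ (g i < 0 ∧ 0 ≤ g j) with hcond
  have hdec : ∀ i j, Decidable (cond i j) := fun i j => by rw [hcond]; infer_instance
  set ψ : ι → ι → ℝ := fun i j => if cond i j then |g i| else 0 with hψ
  -- pointwise bound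
  have hpt : ∀ i j, ψ i j + ψ j i ≤ |g i - g j| := by
    intro i j
    rw [hψ]
    simp only []
    split_ifs with hij hji hji
    · -- both conditions: strictly opposite signs
      rcases hij with ⟨hi, hj⟩ | ⟨hi, hj⟩ <;> rcases hji with ⟨hi', hj'⟩ | ⟨hi', hj'⟩
      · linarith
      · rw [abs_of_pos hi, abs_of_neg hi', abs_of_pos (by linarith : (0:ℝ) < g i - g j)]
        linarith
      · rw [abs_of_neg hi, abs_of_pos hi', abs_of_neg (by linarith : g i - g j < 0)]
        linarith
      · linarith
    · -- cond i j only
      rcases hij with ⟨hi, hj⟩ | ⟨hi, hj⟩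
      · rw [abs_of_pos hi, abs_of_pos (by linarith : (0:ℝ) < g i - g j)]; linarith
      · rw [abs_of_neg hi, abs_of_neg (by linarith : g i - g j < 0)]; linarith
    · -- cond j i only
      rcases hji with ⟨hi, hj⟩ | ⟨hi, hj⟩
      · rw [abs_of_pos hi, abs_of_neg (by linarith : g i - g j < 0)]; linarith
      · rw [abs_of_neg hi, abs_of_pos (by linarith : (0:ℝ) < g i - g j)]; linarith
    · simp [abs_nonneg]
  -- row sums
  have hrow : ∀ i ∈ I, (I.card : ℝ) * |g i| ≤ 2 * ∑ j ∈ I, ψ i j := by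
    intro i hi
    rcases lt_trichotomy (g i) 0 with hneg | hzero | hpos
    · have he : ∑ j ∈ I, ψ i j = ∑ j ∈ I.filter (fun j => 0 ≤ g j), |g i| := by
        rw [hψ, Finset.sum_filter]
        refine Finset.sum_congr rfl fun j hj => ?_
        simp only []
        congr 1
        have : cond i j ↔ (0 ≤ g j) := by
          rw [hcond]
          constructor
          · rintro (⟨h', _⟩ | ⟨_, h'⟩)
            · linarith
            · exact h'
          · intro h'; exact Or.inr ⟨hneg, h'⟩
        simp [this]
      rw [he, Finset.sum_const, nsmul_eq_mul]
      have hcard : (I.card : ℝ) ≤ 2 * ((I.filter fun j => 0 ≤ g j).card : ℝ) := by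
        exact_mod_cast h2
      nlinarith [abs_nonneg (g i)]
    · rw [hzero]
      simp only [abs_zero, mul_zero]
      refine mul_nonneg (by norm_num) (Finset.sum_nonneg fun j hj => ?_)
      rw [hψ]
      simp only []
      split_ifs
      · exact abs_nonneg _
      · exact le_refl 0
    · have he : ∑ j ∈ I, ψ i j = ∑ j ∈ I.filter (fun j => g j ≤ 0), |g i| := by
        rw [hψ, Finset.sum_filter]
        refine Finset.sum_congr rfl fun j hj => ?_
        simp only []
        congr 1
        have : cond i j ↔ (g j ≤ 0) := by
          rw [hcond]
          constructor
          · rintro (⟨_, h'⟩ | ⟨h', _⟩)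
            · exact h'
            · linarith
          · intro h'; exact Or.inl ⟨hpos, h'⟩
        simp [this]
      rw [he, Finset.sum_const, nsmul_eq_mul]
      have hcard : (I.card : ℝ) ≤ 2 * ((I.filter fun j => g j ≤ 0).card : ℝ) := by
        exact_mod_cast h1
      nlinarith [abs_nonneg (g i)]
  -- total
  have htot : ∑ i ∈ I, ∑ j ∈ I, (ψ i j + ψ j i) ≤ ∑ i ∈ I, ∑ j ∈ I, |g i - g j| :=
    Finset.sum_le_sum fun i _ => Finset.sum_le_sum fun j _ => hpt i j
  have hsymm : ∑ i ∈ I, ∑ j ∈ I, (ψ i j + ψ j i) = 2 * ∑ i ∈ I, ∑ j ∈ I, ψ i j := by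
    rw [Finset.sum_congr rfl fun i (hi : i ∈ I) => Finset.sum_add_distrib, Finset.sum_add_distrib]
    rw [Finset.sum_comm (f := fun i j => ψ j i)]
    ring
  have hlow : (I.card : ℝ) * ∑ i ∈ I, |g i| ≤ 2 * ∑ i ∈ I, ∑ j ∈ I, ψ i j := by
    rw [Finset.mul_sum, Finset.mul_sum]
    exact Finset.sum_le_sum hrow
  linarith [htot, hsymm.symm.trans_le htot, hlow]

lemma exists_median (T : Finset (Fin 2 → ℝ)) (hT : T.Nonempty) (i : Fin 2) :
    ∃ m : ℝ, (∃ p ∈ T, p i = m)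
      ∧ T.card ≤ 2 * (T.filter fun t => t i ≤ m).card
      ∧ T.card ≤ 2 * (T.filter fun t => m ≤ t i).card := by
  classical
  set I : Finset ℝ := T.image (fun t => t i) with hI
  have hIne : I.Nonempty := hT.image _
  set Good : Finset ℝ := I.filter (fun m => T.card ≤ 2 * (T.filter fun t => t i ≤ m).card)
    with hGoodDef
  have hmaxGood : I.max' hIne ∈ Good := by
    rw [hGoodDef, Finset.mem_filter]
    refine ⟨I.max'_mem hIne, ?_⟩
    have : T.filter (fun t => t i ≤ I.max' hIne) = T := by
      refine Finset.filter_true_of_mem fun t ht => ?_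
      exact I.le_max' _ (Finset.mem_image_of_mem _ ht)
    rw [this]
    linarith
  have hGoodne : Good.Nonempty := ⟨_, hmaxGood⟩
  set m : ℝ := Good.min' hGoodne with hm
  have hmGood : m ∈ Good := Good.min'_mem hGoodne
  have hmI : m ∈ I := Finset.mem_of_mem_filter _ hmGood
  have hmle : T.card ≤ 2 * (T.filter fun t => t i ≤ m).card := by
    have := Finset.mem_filter.mp hmGood
    exact this.2
  refine ⟨m, ?_, hmle, ?_⟩
  · obtain ⟨p, hp, hpm⟩ := Finset.mem_image.mp hmI
    exact ⟨p, hp, hpm⟩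
  · by_contra hcon
    push_neg at hcon
    have hsplit : (T.filter fun t => t i < m).card + (T.filter fun t => m ≤ t i).card = T.card := by
      have h := Finset.card_filter_add_card_filter_not (s := T)
        (p := fun t => m ≤ t i)
      have e : T.filter (fun t => ¬ (m ≤ t i)) = T.filter (fun t => t i < m) := by
        ext t; simp [not_le]
      rw [e] at h
      rw [Nat.add_comm] at h
      convert h using 2
    have hlt : T.card < 2 * (T.filter fun t => t i < m).card := by
      have hs2 := hsplit
      have hc2 := hcon
      zify at hs2 hc2 ⊢
      linarith
    have hTpos : 0 < T.card := Finset.card_pos.mpr hT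
    have hltne : (T.filter fun t => t i < m).Nonempty := by
      rw [← Finset.card_pos]
      by_contra hz
      push_neg at hz
      have : (T.filter fun t => t i < m).card = 0 := by
        zify at hz ⊢; linarith
      rw [this] at hlt
      zify at hlt hTpos
      linarith
    obtain ⟨t0, ht0⟩ := hltne
    have ht0' := Finset.mem_filter.mp ht0
    have hJne : (I.filter (fun z => z < m)).Nonempty :=
      ⟨t0 i, Finset.mem_filter.mpr ⟨Finset.mem_image_of_mem _ ht0'.1, ht0'.2⟩⟩
    set x' : ℝ := (I.filter (fun z => z < m)).max' hJne with hx'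
    have hx'J : x' ∈ I.filter (fun z => z < m) := Finset.max'_mem _ hJne
    have hx'I : x' ∈ I := Finset.mem_of_mem_filter _ hx'J
    have hx'lt : x' < m := (Finset.mem_filter.mp hx'J).2
    have hsub : (T.filter fun t => t i < m) ⊆ (T.filter fun t => t i ≤ x') := by
      intro t ht
      have ht' := Finset.mem_filter.mp ht
      refine Finset.mem_filter.mpr ⟨ht'.1, ?_⟩
      exact Finset.le_max' (I.filter (fun z => z < m)) (t i)
        (Finset.mem_filter.mpr ⟨Finset.mem_image_of_mem (fun t => t i) ht'.1, ht'.2⟩)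
    have hx'Good : x' ∈ Good := by
      rw [hGoodDef, Finset.mem_filter]
      refine ⟨hx'I, ?_⟩
      have hcc := Finset.card_le_card hsub
      zify at hcc hlt ⊢
      linarith
    have := Good.min'_le _ hx'Good
    rw [← hm] at this
    linarith

lemma double_sum_add {ι : Type*} (I : Finset ι) (f : ι → ℝ) :
    ∑ p ∈ I, ∑ q ∈ I, (f p + f q) = 2 * I.card * ∑ p ∈ I, f p := by
  have h1 : ∀ p ∈ I, ∑ q ∈ I, (f p + f q) = (I.card : ℝ) * f p + ∑ q ∈ I, f q := by
    intro p _
    rw [Finset.sum_add_distrib, Finset.sum_const, nsmul_eq_mul]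
  rw [Finset.sum_congr rfl h1, Finset.sum_add_distrib, ← Finset.mul_sum,
    Finset.sum_const, nsmul_eq_mul]
  ring

lemma min_half (a b : ℝ) : min a b = (a + b) / 2 - |a - b| / 2 := by
  rcases le_total a b with h | h
  · rw [min_eq_left h, abs_of_nonpos (by linarith)]; ring
  · rw [min_eq_right h, abs_of_nonneg (by linarith)]; ring

lemma claim_S (S : Finset (Fin 2 → ℝ)) (c : Fin 2 → ℝ) :
    ∑ p ∈ S, ∑ q ∈ S, dist1 p q
      ≤ (3/2) * S.card * (∑ p ∈ S, dist1 p c)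
        + (1/4) * ∑ p ∈ S, ∑ q ∈ S, |dist1 p c - dist1 q c| := by
  classical
  set x : (Fin 2 → ℝ) → ℝ := fun p => |p 0 - c 0| with hx
  set y : (Fin 2 → ℝ) → ℝ := fun p => |p 1 - c 1| with hy
  set ξ : (Fin 2 → ℝ) → Bool := fun p => decide (0 ≤ p 0 - c 0) with hξ
  set η : (Fin 2 → ℝ) → Bool := fun p => decide (0 ≤ p 1 - c 1) with hη
  have hd : ∀ p, dist1 p c = x p + y p := fun p => dist1_expand p c
  -- pairwise bound
  have hpair : ∀ p q, dist1 p q ≤ dist1 p c + dist1 q c - 2 * epair x y ξ η p q := by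
    intro p q
    have h0 := coord_pair (p 0 - c 0) (q 0 - c 0)
    have h1 := coord_pair (p 1 - c 1) (q 1 - c 1)
    have e0 : (p 0 - c 0) - (q 0 - c 0) = p 0 - q 0 := by ring
    have e1 : (p 1 - c 1) - (q 1 - c 1) = p 1 - q 1 := by ring
    rw [e0] at h0
    rw [e1] at h1
    unfold epair
    rw [dist1_expand p q, dist1_expand p c, dist1_expand q c]
    simp only [hx, hy, hξ, hη]
    linarith
  have hxnn : ∀ p ∈ S, 0 ≤ x p := fun p _ => abs_nonneg _
  have hynn : ∀ p ∈ S, 0 ≤ y p := fun p _ => abs_nonneg _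
  have hgen := genray S.card S x y ξ η (le_refl _) hxnn hynn
  -- rewrite min sums in terms of d
  have hminrw : ∑ p ∈ S, ∑ q ∈ S, min (x p + y p) (x q + y q)
      = ∑ p ∈ S, ∑ q ∈ S, min (dist1 p c) (dist1 q c) := by
    refine Finset.sum_congr rfl fun p _ => Finset.sum_congr rfl fun q _ => ?_
    rw [hd p, hd q]
  have hminsum : ∑ p ∈ S, ∑ q ∈ S, min (dist1 p c) (dist1 q c)
      = S.card * (∑ p ∈ S, dist1 p c)
        - (1/2) * ∑ p ∈ S, ∑ q ∈ S, |dist1 p c - dist1 q c| := by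
    have e : ∀ p ∈ S, ∀ q ∈ S, min (dist1 p c) (dist1 q c)
        = (dist1 p c + dist1 q c) / 2 - |dist1 p c - dist1 q c| / 2 :=
      fun p _ q _ => min_half _ _
    rw [Finset.sum_congr rfl fun p hp => Finset.sum_congr rfl fun q hq => e p hp q hq]
    have e2 : ∑ p ∈ S, ∑ q ∈ S,
        ((dist1 p c + dist1 q c) / 2 - |dist1 p c - dist1 q c| / 2)
        = (1/2) * (∑ p ∈ S, ∑ q ∈ S, (dist1 p c + dist1 q c))
          - (1/2) * ∑ p ∈ S, ∑ q ∈ S, |dist1 p c - dist1 q c| := by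
      rw [Finset.mul_sum, Finset.mul_sum, ← Finset.sum_sub_distrib]
      refine Finset.sum_congr rfl fun p _ => ?_
      rw [Finset.mul_sum, Finset.mul_sum, ← Finset.sum_sub_distrib]
      refine Finset.sum_congr rfl fun q _ => ?_
      ring
    rw [e2, double_sum_add S (fun p => dist1 p c)]
    ring
  -- sum the pairwise bound
  have hsum : ∑ p ∈ S, ∑ q ∈ S, dist1 p q
      ≤ 2 * S.card * (∑ p ∈ S, dist1 p c) - 2 * ∑ p ∈ S, ∑ q ∈ S, epair x y ξ η p q := by
    have h1 : ∑ p ∈ S, ∑ q ∈ S, dist1 p q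
        ≤ ∑ p ∈ S, ∑ q ∈ S, (dist1 p c + dist1 q c - 2 * epair x y ξ η p q) :=
      Finset.sum_le_sum fun p _ => Finset.sum_le_sum fun q _ => hpair p q
    have h2 : ∑ p ∈ S, ∑ q ∈ S, (dist1 p c + dist1 q c - 2 * epair x y ξ η p q)
        = (∑ p ∈ S, ∑ q ∈ S, (dist1 p c + dist1 q c))
          - 2 * ∑ p ∈ S, ∑ q ∈ S, epair x y ξ η p q := by
      rw [Finset.mul_sum, ← Finset.sum_sub_distrib]
      refine Finset.sum_congr rfl fun p _ => ?_
      rw [Finset.mul_sum, ← Finset.sum_sub_distrib]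
    rw [h2, double_sum_add S (fun p => dist1 p c)] at h1
    exact h1
  rw [hminrw, hminsum] at hgen
  linarith [hgen, hsum]

lemma transfer (P S T : Finset (Fin 2 → ℝ)) (c : Fin 2 → ℝ)
    (hSP : S ⊆ P) (hTP : T ⊆ P) (hcard : S.card = T.card)
    (hnear : ∀ s ∈ S, ∀ t ∈ P \ S, dist1 s c ≤ dist1 t c) :
    (3/2) * S.card * (∑ p ∈ S, dist1 p c)
        + (1/4) * ∑ p ∈ S, ∑ q ∈ S, |dist1 p c - dist1 q c|
      ≤ (3/2) * T.card * (∑ p ∈ T, dist1 p c)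
        + (1/4) * ∑ p ∈ T, ∑ q ∈ T, |dist1 p c - dist1 q c| := by
  classical
  have hST : (S \ T).card = (T \ S).card := by
    have h1 := Finset.card_sdiff_add_card_inter S T
    have h2 := Finset.card_sdiff_add_card_inter T S
    rw [Finset.inter_comm] at h2
    omega
  set e := Finset.equivOfCardEq hST with he
  set ψ : (Fin 2 → ℝ) → (Fin 2 → ℝ) :=
    fun p => if h : p ∈ S \ T then (e ⟨p, h⟩ : {x // x ∈ T \ S}).1 else p with hψ
  set ψ' : (Fin 2 → ℝ) → (Fin 2 → ℝ) :=
    fun p => if h : p ∈ T \ S then (e.symm ⟨p, h⟩ : {x // x ∈ S \ T}).1 else p with hψ'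
  have hψmem : ∀ p ∈ S, ψ p ∈ T := by
    intro p hp
    simp only [hψ]
    by_cases h : p ∈ S \ T
    · rw [dif_pos h]
      exact (Finset.mem_sdiff.mp (e ⟨p, h⟩).2).1
    · rw [dif_neg h]
      rw [Finset.mem_sdiff] at h
      push_neg at h
      exact h hp
  have hψ'mem : ∀ p ∈ T, ψ' p ∈ S := by
    intro p hp
    simp only [hψ']
    by_cases h : p ∈ T \ S
    · rw [dif_pos h]
      exact (Finset.mem_sdiff.mp (e.symm ⟨p, h⟩).2).1
    · rw [dif_neg h]
      rw [Finset.mem_sdiff] at h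
      push_neg at h
      exact h hp
  have hinv1 : ∀ p ∈ S, ψ' (ψ p) = p := by
    intro p hp
    by_cases h : p ∈ S \ T
    · have h1 : ψ p = (e ⟨p, h⟩).1 := by simp only [hψ]; rw [dif_pos h]
      have h2 : ψ p ∈ T \ S := by rw [h1]; exact (e ⟨p, h⟩).2
      simp only [hψ']; rw [dif_pos h2]
      have : (⟨ψ p, h2⟩ : {x // x ∈ T \ S}) = e ⟨p, h⟩ := by
        apply Subtype.ext
        exact h1
      rw [this, Equiv.symm_apply_apply]
    · have h1 : ψ p = p := by simp only [hψ]; rw [dif_neg h]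
      rw [h1]
      simp only [hψ']
      have h2 : p ∉ T \ S := fun hc => (Finset.mem_sdiff.mp hc).2 hp
      rw [dif_neg h2]
  have hinv2 : ∀ p ∈ T, ψ (ψ' p) = p := by
    intro p hp
    by_cases h : p ∈ T \ S
    · have h1 : ψ' p = (e.symm ⟨p, h⟩).1 := by simp only [hψ']; rw [dif_pos h]
      have h2 : ψ' p ∈ S \ T := by rw [h1]; exact (e.symm ⟨p, h⟩).2
      simp only [hψ]; rw [dif_pos h2]
      have : (⟨ψ' p, h2⟩ : {x // x ∈ S \ T}) = e.symm ⟨p, h⟩ := by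
        apply Subtype.ext
        exact h1
      rw [this, Equiv.apply_symm_apply]
    · have h1 : ψ' p = p := by simp only [hψ']; rw [dif_neg h]
      rw [h1]
      simp only [hψ]
      have h2 : p ∉ S \ T := fun hc => (Finset.mem_sdiff.mp hc).2 hp
      rw [dif_neg h2]
  have hdle : ∀ p ∈ S, dist1 p c ≤ dist1 (ψ p) c := by
    intro p hp
    by_cases h : p ∈ S \ T
    · have h1 : ψ p = (e ⟨p, h⟩).1 := by simp only [hψ]; rw [dif_pos h]
      have h2 : ψ p ∈ T \ S := by rw [h1]; exact (e ⟨p, h⟩).2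
      have h3 : ψ p ∈ P \ S := by
        rw [Finset.mem_sdiff] at h2 ⊢
        exact ⟨hTP h2.1, h2.2⟩
      exact hnear p hp _ h3
    · have h1 : ψ p = p := by simp only [hψ]; rw [dif_neg h]
      rw [h1]
  -- transport sums
  have hsumA : ∑ p ∈ T, dist1 p c = ∑ p ∈ S, dist1 (ψ p) c :=
    (Finset.sum_nbij' ψ ψ' hψmem hψ'mem hinv1 hinv2 (fun a _ => rfl)).symm
  have hsumV : ∑ p ∈ T, ∑ q ∈ T, |dist1 p c - dist1 q c|
      = ∑ p ∈ S, ∑ q ∈ S, |dist1 (ψ p) c - dist1 (ψ q) c| := by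
    refine (Finset.sum_nbij' ψ ψ' hψmem hψ'mem hinv1 hinv2 (fun a ha => ?_)).symm
    exact Finset.sum_nbij' ψ ψ' hψmem hψ'mem hinv1 hinv2 (fun b _ => rfl)
  rw [hsumA, hsumV, ← hcard]
  -- now everything is a sum over S
  set d : (Fin 2 → ℝ) → ℝ := fun p => dist1 p c with hdd
  have hptV : ∀ p ∈ S, ∀ q ∈ S, |d p - d q|
      ≤ |d (ψ p) - d (ψ q)| + ((d (ψ p) - d p) + (d (ψ q) - d q)) := by
    intro p hp q hq
    have t1 : |d p - d q| ≤ |d p - d (ψ p)| + |d (ψ p) - d q| := abs_sub_le _ _ _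
    have t2 : |d (ψ p) - d q| ≤ |d (ψ p) - d (ψ q)| + |d (ψ q) - d q| := abs_sub_le _ _ _
    have t3 : |d p - d (ψ p)| = d (ψ p) - d p := by
      rw [abs_of_nonpos (by linarith [hdle p hp])]
      ring
    have t4 : |d (ψ q) - d q| = d (ψ q) - d q := abs_of_nonneg (by linarith [hdle q hq])
    linarith
  have hV : ∑ p ∈ S, ∑ q ∈ S, |d p - d q|
      ≤ (∑ p ∈ S, ∑ q ∈ S, |d (ψ p) - d (ψ q)|)
        + 2 * S.card * (∑ p ∈ S, (d (ψ p) - d p)) := by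
    have h1 : ∑ p ∈ S, ∑ q ∈ S, |d p - d q|
        ≤ ∑ p ∈ S, ∑ q ∈ S, (|d (ψ p) - d (ψ q)| + ((d (ψ p) - d p) + (d (ψ q) - d q))) :=
      Finset.sum_le_sum fun p hp => Finset.sum_le_sum fun q hq => hptV p hp q hq
    have h2 : ∑ p ∈ S, ∑ q ∈ S, (|d (ψ p) - d (ψ q)| + ((d (ψ p) - d p) + (d (ψ q) - d q)))
        = (∑ p ∈ S, ∑ q ∈ S, |d (ψ p) - d (ψ q)|)
          + ∑ p ∈ S, ∑ q ∈ S, ((d (ψ p) - d p) + (d (ψ q) - d q)) := by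
      rw [← Finset.sum_add_distrib]
      refine Finset.sum_congr rfl fun p _ => ?_
      rw [← Finset.sum_add_distrib]
    rw [h2, double_sum_add S (fun p => d (ψ p) - d p)] at h1
    exact h1
  have hΔ : 0 ≤ ∑ p ∈ S, (d (ψ p) - d p) :=
    Finset.sum_nonneg fun p hp => by linarith [hdle p hp]
  have hAsum : ∑ p ∈ S, d (ψ p) = ∑ p ∈ S, d p + ∑ p ∈ S, (d (ψ p) - d p) := by
    rw [← Finset.sum_add_distrib]
    refine Finset.sum_congr rfl fun p _ => by ring
  have hn : (0:ℝ) ≤ S.card := Nat.cast_nonneg _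
  rw [hAsum]
  nlinarith [hV, hΔ, hn]

lemma median_bound (T : Finset (Fin 2 → ℝ)) (c : Fin 2 → ℝ)
    (h0le : T.card ≤ 2 * (T.filter fun t => t 0 ≤ c 0).card)
    (h0ge : T.card ≤ 2 * (T.filter fun t => c 0 ≤ t 0).card)
    (h1le : T.card ≤ 2 * (T.filter fun t => t 1 ≤ c 1).card)
    (h1ge : T.card ≤ 2 * (T.filter fun t => c 1 ≤ t 1).card) :
    (T.card : ℝ) * (∑ p ∈ T, dist1 p c) ≤ ∑ p ∈ T, ∑ q ∈ T, dist1 p q := by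
  classical
  set g0 : (Fin 2 → ℝ) → ℝ := fun t => t 0 - c 0 with hg0
  set g1 : (Fin 2 → ℝ) → ℝ := fun t => t 1 - c 1 with hg1
  have hf0le : T.filter (fun t => g0 t ≤ 0) = T.filter (fun t => t 0 ≤ c 0) := by
    ext t; simp [hg0, sub_nonpos]
  have hf0ge : T.filter (fun t => 0 ≤ g0 t) = T.filter (fun t => c 0 ≤ t 0) := by
    ext t; simp [hg0, sub_nonneg]
  have hf1le : T.filter (fun t => g1 t ≤ 0) = T.filter (fun t => t 1 ≤ c 1) := by
    ext t; simp [hg1, sub_nonpos]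
  have hf1ge : T.filter (fun t => 0 ≤ g1 t) = T.filter (fun t => c 1 ≤ t 1) := by
    ext t; simp [hg1, sub_nonneg]
  have hmed0 := oneDmed T g0 (by rw [hf0le]; exact h0le) (by rw [hf0ge]; exact h0ge)
  have hmed1 := oneDmed T g1 (by rw [hf1le]; exact h1le) (by rw [hf1ge]; exact h1ge)
  have hrw : ∑ p ∈ T, ∑ q ∈ T, dist1 p q
      = (∑ p ∈ T, ∑ q ∈ T, |g0 p - g0 q|) + (∑ p ∈ T, ∑ q ∈ T, |g1 p - g1 q|) := by
    rw [← Finset.sum_add_distrib]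
    refine Finset.sum_congr rfl fun p _ => ?_
    rw [← Finset.sum_add_distrib]
    refine Finset.sum_congr rfl fun q _ => ?_
    rw [dist1_expand]
    have e0 : p 0 - q 0 = g0 p - g0 q := by rw [hg0]; ring
    have e1 : p 1 - q 1 = g1 p - g1 q := by rw [hg1]; ring
    rw [e0, e1]
  have hdrw : ∑ p ∈ T, dist1 p c = (∑ p ∈ T, |g0 p|) + (∑ p ∈ T, |g1 p|) := by
    rw [← Finset.sum_add_distrib]
    refine Finset.sum_congr rfl fun p _ => ?_
    rw [dist1_expand]
  rw [hrw, hdrw]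
  have := hmed0
  nlinarith [hmed0, hmed1]

lemma vbound (T : Finset (Fin 2 → ℝ)) (c : Fin 2 → ℝ) :
    ∑ p ∈ T, ∑ q ∈ T, |dist1 p c - dist1 q c| ≤ ∑ p ∈ T, ∑ q ∈ T, dist1 p q :=
  Finset.sum_le_sum fun p _ => Finset.sum_le_sum fun q _ => abs_dist1_sub c p q

end MM74

/-- The Manhattan Median algorithm MM is a 7/4-approximation on 2D point sets:
there is a candidate median `c`, with x-coordinate from `P` and y-coordinate from `P`,
such that every set of `k` nearest points of `P` to `c` has weight at most `(7/4)·OPT`. -/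
theorem mm_is_74_approximation
    (P : Finset (Fin 2 → ℝ)) (k : ℕ) (hk2 : 2 ≤ k) (hkP : k ≤ P.card)
    (OPT : ℝ)
    (hOPT : IsLeast {x : ℝ | ∃ T ⊆ P, T.card = k ∧ w T = x} OPT) :
    ∃ c : Fin 2 → ℝ,
      (∃ p ∈ P, c 0 = p 0) ∧ (∃ q ∈ P, c 1 = q 1) ∧
      ∀ S ⊆ P, S.card = k →
        (∀ s ∈ S, ∀ t ∈ P \ S, dist1 s c ≤ dist1 t c) →
        w S ≤ (7 / 4) * OPT := by
  classical
  obtain ⟨T, hTP, hTk, hwT⟩ := hOPT.1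
  have hTne : T.Nonempty := Finset.card_pos.mp (by omega)
  obtain ⟨m₀, ⟨p₀, hp₀T, hp₀⟩, hm₀le, hm₀ge⟩ := MM74.exists_median T hTne 0
  obtain ⟨m₁, ⟨p₁, hp₁T, hp₁⟩, hm₁le, hm₁ge⟩ := MM74.exists_median T hTne 1
  set c : Fin 2 → ℝ := ![m₀, m₁] with hc
  have hc0 : c 0 = m₀ := rfl
  have hc1 : c 1 = m₁ := rfl
  refine ⟨c, ⟨p₀, hTP hp₀T, by rw [hc0, hp₀]⟩, ⟨p₁, hTP hp₁T, by rw [hc1, hp₁]⟩, ?_⟩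
  intro S hSP hSk hnear
  have hwTnn : (0:ℝ) ≤ ∑ p ∈ T, ∑ q ∈ T, dist1 p q :=
    Finset.sum_nonneg fun p _ => Finset.sum_nonneg fun q _ => MM74.dist1_nonneg p q
  have step1 := MM74.claim_S S c
  have step2 := MM74.transfer P S T c hSP hTP (by rw [hSk, hTk]) hnear
  have step3 := MM74.median_bound T c (by rw [hc0]; exact hm₀le) (by rw [hc0]; exact hm₀ge)
    (by rw [hc1]; exact hm₁le) (by rw [hc1]; exact hm₁ge)
  have step4 := MM74.vbound T c
  have hfin : ∑ p ∈ S, ∑ q ∈ S, dist1 p q ≤ (7/4) * ∑ p ∈ T, ∑ q ∈ T, dist1 p q := by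
    have h3 : (3/2) * T.card * (∑ p ∈ T, dist1 p c) ≤ (3/2) * ∑ p ∈ T, ∑ q ∈ T, dist1 p q := by
      nlinarith [step3]
    nlinarith [step1, step2, step4]
  have : w S ≤ (7/4) * w T := by
    rw [w, w]; linarith
  rw [hwT] at this
  exact this
end

section
/- Let P be a finite set of points in ℝ² with |P| ≥ 3. Then there exist a 3-element subset S ⊆ P that minimizes w(S) over all 3-element subsets of P, and a point c ∈ ℝ² (namely the coordinatewise median of the three points of S, the center of the smallest Steiner star of S), such that ‖s−c‖₁ ≤ ‖p−c‖₁ for every s ∈ S and every p ∈ P∖S; i.e., some optimal 3-subset consists of three points of P nearest to c in the L1 metric. -/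
open Finset

/-- The median of three real numbers. -/
noncomputable def med3 (a b c : ℝ) : ℝ := max (min a b) (max (min b c) (min a c))

set_option maxHeartbeats 1000000 in
lemma med3_id (a b c : ℝ) :
    |a-b| + |a-c| + |b-c| =
      2*(|a - med3 a b c| + |b - med3 a b c| + |c - med3 a b c|) := by
  unfold med3
  simp only [min_def, max_def]
  split_ifs <;>
  simp only [sub_self, abs_zero, abs_sub_comm] <;>
  rcases abs_cases (a-b) with ⟨e1,e1'⟩|⟨e1,e1'⟩ <;>
  rcases abs_cases (a-c) with ⟨e2,e2'⟩|⟨e2,e2'⟩ <;>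
  rcases abs_cases (b-c) with ⟨e3,e3'⟩|⟨e3,e3'⟩ <;>
  linarith

lemma dist1_self (p : Fin 2 → ℝ) : dist1 p p = 0 := by simp [dist1]

lemma dist1_comm (p q : Fin 2 → ℝ) : dist1 p q = dist1 q p := by
  simp [dist1, abs_sub_comm]

lemma dist1_triangle (p q r : Fin 2 → ℝ) : dist1 p q ≤ dist1 p r + dist1 r q := by
  unfold dist1
  rw [← Finset.sum_add_distrib]
  exact Finset.sum_le_sum fun i _ => abs_sub_le (p i) (r i) (q i)

lemma sum_triple {a b c : Fin 2 → ℝ} (hab : a ≠ b) (hac : a ≠ c) (hbc : b ≠ c)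
    (f : (Fin 2 → ℝ) → ℝ) :
    ∑ x ∈ ({a, b, c} : Finset (Fin 2 → ℝ)), f x = f a + f b + f c := by
  rw [show ({a,b,c} : Finset (Fin 2 → ℝ)) = insert a (insert b {c}) from rfl,
    Finset.sum_insert (by simp [hab, hac]), Finset.sum_insert (by simp [hbc]),
    Finset.sum_singleton]
  ring

lemma w_triple {a b c : Fin 2 → ℝ} (hab : a ≠ b) (hac : a ≠ c) (hbc : b ≠ c) :
    w {a, b, c} = dist1 a b + dist1 a c + dist1 b c := by
  unfold w
  rw [sum_triple hab hac hbc, sum_triple hab hac hbc, sum_triple hab hac hbc,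
    sum_triple hab hac hbc, dist1_self, dist1_self, dist1_self,
    dist1_comm b a, dist1_comm c a, dist1_comm c b]
  ring

lemma w_triple_le {a b c : Fin 2 → ℝ} (hab : a ≠ b) (hac : a ≠ c) (hbc : b ≠ c)
    (m : Fin 2 → ℝ) :
    w {a, b, c} ≤ 2 * (dist1 a m + dist1 b m + dist1 c m) := by
  rw [w_triple hab hac hbc]
  have h1 := dist1_triangle a b m
  have h2 := dist1_triangle a c m
  have h3 := dist1_triangle b c m
  rw [dist1_comm m b] at h1
  rw [dist1_comm m c] at h2 h3
  linarith

lemma w_triple_med {a b c : Fin 2 → ℝ} (hab : a ≠ b) (hac : a ≠ c) (hbc : b ≠ c) :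
    w {a, b, c} = 2 * (dist1 a (fun i => med3 (a i) (b i) (c i))
      + dist1 b (fun i => med3 (a i) (b i) (c i))
      + dist1 c (fun i => med3 (a i) (b i) (c i))) := by
  rw [w_triple hab hac hbc]
  simp only [dist1, Fin.sum_univ_two]
  have h0 := med3_id (a 0) (b 0) (c 0)
  have h1 := med3_id (a 1) (b 1) (c 1)
  linarith

/-- Some optimal 3-subset of `P` (minimizing the total pairwise L1 distance) consists of
three points of `P` that are nearest (in L1) to the coordinatewise median `c` of the three
points — the center of the smallest Steiner star of the subset. -/
theorem optimal_triple_is_nearest_to_median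
    (P : Finset (Fin 2 → ℝ)) (hP : 3 ≤ P.card) :
    ∃ S ⊆ P, S.card = 3 ∧
      (∀ T ⊆ P, T.card = 3 → w S ≤ w T) ∧
      ∃ s₀ s₁ s₂ : Fin 2 → ℝ, S = {s₀, s₁, s₂} ∧
        ∀ s ∈ S, ∀ p ∈ P \ S,
          dist1 s (fun i => med3 (s₀ i) (s₁ i) (s₂ i)) ≤
          dist1 p (fun i => med3 (s₀ i) (s₁ i) (s₂ i)) := by
  obtain ⟨S, hSmem, hmin⟩ := Finset.exists_min_image (P.powersetCard 3) w
    (Finset.powersetCard_nonempty.mpr hP)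
  rw [Finset.mem_powersetCard] at hSmem
  obtain ⟨hSP, hS3⟩ := hSmem
  obtain ⟨a, b, c, hab, hac, hbc, rfl⟩ := Finset.card_eq_three.mp hS3
  have hminT : ∀ T ⊆ P, T.card = 3 → w {a, b, c} ≤ w T := fun T hTP hT3 =>
    hmin T (Finset.mem_powersetCard.mpr ⟨hTP, hT3⟩)
  refine ⟨{a, b, c}, hSP, hS3, hminT, a, b, c, rfl, ?_⟩
  intro s hs p hp
  rw [Finset.mem_sdiff] at hp
  obtain ⟨hpP, hpS⟩ := hp
  have hpa : p ≠ a := fun h => hpS (by simp [h])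
  have hpb : p ≠ b := fun h => hpS (by simp [h])
  have hpc : p ≠ c := fun h => hpS (by simp [h])
  set m : Fin 2 → ℝ := fun i => med3 (a i) (b i) (c i) with hm
  by_contra hlt
  push_neg at hlt
  have haP : a ∈ P := hSP (by simp)
  have hbP : b ∈ P := hSP (by simp)
  have hcP : c ∈ P := hSP (by simp)
  have hwS := w_triple_med hab hac hbc
  rw [← hm] at hwS
  simp only [Finset.mem_insert, Finset.mem_singleton] at hs
  rcases hs with rfl | rfl | rfl
  · -- s = a, replace a by p
    have hT : w ({p, b, c} : Finset _) ≤ 2 * (dist1 p m + dist1 b m + dist1 c m) :=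
      w_triple_le hpb hpc hbc m
    have hcard : ({p, b, c} : Finset (Fin 2 → ℝ)).card = 3 :=
      Finset.card_eq_three.mpr ⟨p, b, c, hpb, hpc, hbc, rfl⟩
    have hsub : ({p, b, c} : Finset (Fin 2 → ℝ)) ⊆ P := by
      simp [Finset.insert_subset_iff, hpP, hbP, hcP]
    have := hminT _ hsub hcard
    linarith
  · -- s = b
    have hT : w ({p, a, c} : Finset _) ≤ 2 * (dist1 p m + dist1 a m + dist1 c m) :=
      w_triple_le hpa hpc hac m
    have hcard : ({p, a, c} : Finset (Fin 2 → ℝ)).card = 3 :=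
      Finset.card_eq_three.mpr ⟨p, a, c, hpa, hpc, hac, rfl⟩
    have hsub : ({p, a, c} : Finset (Fin 2 → ℝ)) ⊆ P := by
      simp [Finset.insert_subset_iff, hpP, haP, hcP]
    have := hminT _ hsub hcard
    linarith
  · -- s = c
    have hT : w ({p, a, b} : Finset _) ≤ 2 * (dist1 p m + dist1 a m + dist1 b m) :=
      w_triple_le hpa hpb hab m
    have hcard : ({p, a, b} : Finset (Fin 2 → ℝ)).card = 3 :=
      Finset.card_eq_three.mpr ⟨p, a, b, hpa, hpb, hab, rfl⟩
    have hsub : ({p, a, b} : Finset (Fin 2 → ℝ)) ⊆ P := by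
      simp [Finset.insert_subset_iff, hpP, haP, hbP]
    have := hminT _ hsub hcard
    linarith
end

section
/- Under the following setup, the set A produced by the PTAS selection rule satisfies w(A)·(1 − 1/(m−2) − 2/(m−1)) ≤ w(OPT). Setup: m > 2 is an integer, k a positive multiple of m, and P a finite set of points in ℝ² with pairwise distinct x-coordinates and pairwise distinct y-coordinates; ξ₀ < … < ξ_m and η₀ < … < η_m are reals defining vertical strips X_i = {p : ξ_i ≤ p_x < ξ_{i+1}}, horizontal strips Y_j = {p : η_j ≤ p_y < η_{j+1}}, and cells C_{ij} = X_i ∩ Y_j; OPT ⊆ P with |OPT| = k minimizes w over all k-element subsets of P, OPT ⊆ ∪_{i,j} C_{ij}, and |OPT ∩ X_i| = |OPT ∩ Y_j| = k/m for all i, j; k_{ij} = |OPT ∩ C_{ij}|, ∇_{ij} = ((2i+1−m)k/m, (2j+1−m)k/m); for each i,j, A_{ij} ⊆ P ∩ C_{ij} with |A_{ij}| = k_{ij} minimizes Σ_{p∈A_{ij}} ⟨p, ∇_{ij}⟩ over all k_{ij}-element subsets of P ∩ C_{ij}; and A = ∪_{i,j} A_{ij}. -/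
open Finset
open scoped Classical

private lemma sum_split_diag (M : ℕ) (F : ℕ → ℕ → ℝ) :
    ∑ i ∈ range M, ∑ j ∈ range M, F i j
      = (∑ i ∈ range M, F i i)
        + ∑ j ∈ range M, ∑ i ∈ range j, (F i j + F j i) := by
  induction M with
  | zero => simp
  | succ M ih =>
    simp only [sum_range_succ, sum_add_distrib]
    simp only [sum_add_distrib] at ih
    linarith [ih]

private lemma coeff_identity (T : ℕ → ℝ) (M : ℕ) :
    ∑ j ∈ range M, ∑ i ∈ range j, (T j - T i)
      = ∑ i ∈ range M, (2 * (i : ℝ) + 1 - M) * T i := by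
  induction M with
  | zero => simp
  | succ M ih =>
    rw [sum_range_succ, ih, sum_range_succ]
    have h1 : ∀ i ∈ range M, (2 * (i : ℝ) + 1 - (M + 1 : ℕ)) * T i
        = (2 * (i : ℝ) + 1 - M) * T i - T i := by
      intro i _; push_cast; ring
    rw [sum_congr rfl h1, sum_sub_distrib, sum_sub_distrib, sum_const, card_range,
      nsmul_eq_mul]
    push_cast
    ring

private lemma exists_strip (g : ℕ → ℝ) (x : ℝ) :
    ∀ M, g 0 ≤ x → x < g M → ∃ i, i < M ∧ g i ≤ x ∧ x < g (i + 1) := by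
  intro M
  induction M with
  | zero => intro h1 h2; exact absurd h2 (not_lt.mpr h1)
  | succ M ih =>
    intro h1 h2
    by_cases hx : x < g M
    · obtain ⟨i, hi, h⟩ := ih h1 hx
      exact ⟨i, Nat.lt_succ_of_lt hi, h⟩
    · exact ⟨M, Nat.lt_succ_self M, not_lt.mp hx, h2⟩

private lemma grid_mono (g : ℕ → ℝ) (M : ℕ) (h : ∀ i < M, g i < g (i + 1)) :
    ∀ a b, a ≤ b → b ≤ M → g a ≤ g b := by
  intro a b hab
  induction hab with
  | refl => intro _; exact le_rfl
  | @step b hb ih =>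
    intro hbM
    exact (ih (by omega)).trans (le_of_lt (h b (by omega)))

private lemma strip_main {α : Type*} [DecidableEq α] (M N : ℕ) (hM : 2 < M) (hN : 0 < N)
    (S : ℕ → Finset α)
    (hdisj : ∀ i ∈ range M, ∀ j ∈ range M, i ≠ j → Disjoint (S i) (S j))
    (hcard : ∀ i ∈ range M, (S i).card = N)
    (f : α → ℝ)
    (hsep : ∀ i ∈ range M, ∀ j ∈ range M, i < j → ∀ p ∈ S i, ∀ q ∈ S j, f p ≤ f q) :
    2 * (∑ i ∈ range M, ∑ p ∈ S i, ((N : ℝ) * (2 * i + 1 - M)) * f p)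
        ≤ (∑ p ∈ (range M).biUnion S, ∑ q ∈ (range M).biUnion S, |f p - f q|)
    ∧ ((M : ℝ) - 1) *
        ((∑ p ∈ (range M).biUnion S, ∑ q ∈ (range M).biUnion S, |f p - f q|)
          - 2 * (∑ i ∈ range M, ∑ p ∈ S i, ((N : ℝ) * (2 * i + 1 - M)) * f p))
        ≤ 2 * (∑ p ∈ (range M).biUnion S, ∑ q ∈ (range M).biUnion S, |f p - f q|) := by
  classical
  have hpd : (↑(range M) : Set ℕ).PairwiseDisjoint S := fun i hi j hj hij =>
    hdisj i (by simpa using hi) j (by simpa using hj) hij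
  set U := (range M).biUnion S with hU
  set cross := 2 * (∑ i ∈ range M, ∑ p ∈ S i, ((N : ℝ) * (2 * i + 1 - M)) * f p) with hcrs
  set total := (∑ p ∈ U, ∑ q ∈ U, |f p - f q|) with htl
  -- total as double sum over strips
  have htot : total = ∑ i ∈ range M, ∑ j ∈ range M, ∑ p ∈ S i, ∑ q ∈ S j, |f p - f q| := by
    rw [htl, hU]
    simp only [sum_biUnion hpd]
    exact sum_congr rfl fun i _ => sum_comm
  -- value of cross strip pairs
  have hF : ∀ i ∈ range M, ∀ j ∈ range M, i < j →
      (∑ p ∈ S i, ∑ q ∈ S j, |f p - f q|)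
        = (N : ℝ) * (∑ q ∈ S j, f q) - (N : ℝ) * (∑ p ∈ S i, f p) := by
    intro i hi j hj hij
    have h1 : ∀ p ∈ S i, (∑ q ∈ S j, |f p - f q|) = (∑ q ∈ S j, f q) - (N : ℝ) * f p := by
      intro p hp
      have h2 : ∀ q ∈ S j, |f p - f q| = f q - f p := fun q hq => by
        rw [abs_sub_comm]
        exact abs_of_nonneg (sub_nonneg.mpr (hsep i hi j hj hij p hp q hq))
      rw [sum_congr rfl h2, sum_sub_distrib, sum_const, hcard j hj, nsmul_eq_mul]
    rw [sum_congr rfl h1, sum_sub_distrib, sum_const, hcard i hi, nsmul_eq_mul, ← mul_sum]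
  have hF' : ∀ i ∈ range M, ∀ j ∈ range M, i < j →
      (∑ p ∈ S j, ∑ q ∈ S i, |f p - f q|)
        = (N : ℝ) * (∑ q ∈ S j, f q) - (N : ℝ) * (∑ p ∈ S i, f p) := by
    intro i hi j hj hij
    rw [← hF i hi j hj hij, sum_comm]
    refine sum_congr rfl fun p _ => sum_congr rfl fun q _ => abs_sub_comm _ _
  -- decomposition
  have hdecomp : total
      = (∑ i ∈ range M, ∑ p ∈ S i, ∑ q ∈ S i, |f p - f q|) + cross := by
    rw [htot, sum_split_diag]
    congr 1
    rw [hcrs]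
    have h3 : ∀ j ∈ range M, (∑ i ∈ range j,
        ((∑ p ∈ S i, ∑ q ∈ S j, |f p - f q|) + (∑ p ∈ S j, ∑ q ∈ S i, |f p - f q|)))
        = ∑ i ∈ range j, (2 * (N : ℝ)) * ((∑ q ∈ S j, f q) - (∑ q ∈ S i, f q)) := by
      intro j hj
      refine sum_congr rfl fun i hi => ?_
      have hiM : i ∈ range M := mem_range.mpr (lt_trans (mem_range.mp hi) (mem_range.mp hj))
      rw [hF i hiM j hj (mem_range.mp hi), hF' i hiM j hj (mem_range.mp hi)]
      ring
    rw [sum_congr rfl h3]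
    have h4 : ∑ j ∈ range M, ∑ i ∈ range j, (2 * (N : ℝ)) * ((∑ q ∈ S j, f q) - (∑ q ∈ S i, f q))
        = (2 * (N : ℝ)) * ∑ j ∈ range M, ∑ i ∈ range j, ((∑ q ∈ S j, f q) - (∑ q ∈ S i, f q)) := by
      rw [mul_sum]; exact sum_congr rfl fun j _ => by rw [mul_sum]
    rw [h4, coeff_identity (fun i => ∑ q ∈ S i, f q) M]
    have h5 : ∀ i ∈ range M, (∑ p ∈ S i, ((N : ℝ) * (2 * i + 1 - M)) * f p)
        = (N : ℝ) * ((2 * (i : ℝ) + 1 - M) * ∑ q ∈ S i, f q) := by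
      intro i _
      rw [← mul_sum]
      ring
    rw [sum_congr rfl h5, ← mul_sum]
    ring
  set intra := (∑ i ∈ range M, ∑ p ∈ S i, ∑ q ∈ S i, |f p - f q|) with hin
  have hintra_nonneg : 0 ≤ intra := by
    refine sum_nonneg fun i _ => sum_nonneg fun p _ => sum_nonneg fun q _ => abs_nonneg _
  have htotal_nonneg : 0 ≤ total := by
    rw [htl]
    exact sum_nonneg fun p _ => sum_nonneg fun q _ => abs_nonneg _
  -- intra bound
  have hG : ∀ i ∈ range M, ((M : ℝ)) * (∑ p ∈ S i, ∑ q ∈ S i, |f p - f q|)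
      ≤ 2 * (∑ p ∈ S i, ∑ r ∈ U, |f p - f r|) := by
    intro i hi
    have hUcard : (U.card : ℝ) = (M : ℝ) * N := by
      rw [hU, card_biUnion (fun x hx y hy hxy => hdisj x hx y hy hxy)]
      rw [sum_congr rfl hcard, sum_const, card_range, smul_eq_mul]
      push_cast; ring
    have key : ∀ p ∈ S i, ∀ q ∈ S i,
        ((M : ℝ) * N) * |f p - f q| ≤ ∑ r ∈ U, (|f p - f r| + |f q - f r|) := by
      intro p hp q hq
      have h5 : ((M : ℝ) * N) * |f p - f q| = ∑ _r ∈ U, |f p - f q| := by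
        rw [sum_const, nsmul_eq_mul, ← hUcard]
      rw [h5]
      refine sum_le_sum fun r _ => ?_
      calc |f p - f q| ≤ |f p - f r| + |f r - f q| := abs_sub_le _ _ _
        _ = |f p - f r| + |f q - f r| := by rw [abs_sub_comm (f r) (f q)]
    have hsum : ((M : ℝ) * N) * (∑ p ∈ S i, ∑ q ∈ S i, |f p - f q|)
        ≤ ∑ p ∈ S i, ∑ q ∈ S i, ∑ r ∈ U, (|f p - f r| + |f q - f r|) := by
      rw [mul_sum]
      refine sum_le_sum fun p hp => ?_
      rw [mul_sum]
      exact sum_le_sum fun q hq => key p hp q hq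
    have hrhs : (∑ p ∈ S i, ∑ q ∈ S i, ∑ r ∈ U, (|f p - f r| + |f q - f r|))
        = (N : ℝ) * (2 * (∑ p ∈ S i, ∑ r ∈ U, |f p - f r|)) := by
      have e1 : (∑ p ∈ S i, ∑ q ∈ S i, ∑ r ∈ U, (|f p - f r| + |f q - f r|))
          = (∑ p ∈ S i, ∑ q ∈ S i, ∑ r ∈ U, |f p - f r|)
            + (∑ p ∈ S i, ∑ q ∈ S i, ∑ r ∈ U, |f q - f r|) := by
        simp only [sum_add_distrib]
      have e2 : ∀ p ∈ S i, (∑ _q ∈ S i, ∑ r ∈ U, |f p - f r|)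
          = (N : ℝ) * ∑ r ∈ U, |f p - f r| := by
        intro p _
        rw [sum_const, hcard i hi, nsmul_eq_mul]
      have e3 : (∑ _p ∈ S i, ∑ q ∈ S i, ∑ r ∈ U, |f q - f r|)
          = (N : ℝ) * ∑ q ∈ S i, ∑ r ∈ U, |f q - f r| := by
        rw [sum_const, hcard i hi, nsmul_eq_mul]
      rw [e1, sum_congr rfl e2, e3, ← mul_sum]
      ring
    have hN' : (0 : ℝ) < N := by positivity
    have := hsum.trans (le_of_eq hrhs)
    have h6 : (N : ℝ) * ((M : ℝ) * (∑ p ∈ S i, ∑ q ∈ S i, |f p - f q|))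
        ≤ (N : ℝ) * (2 * (∑ p ∈ S i, ∑ r ∈ U, |f p - f r|)) := by
      calc (N : ℝ) * ((M : ℝ) * (∑ p ∈ S i, ∑ q ∈ S i, |f p - f q|))
          = ((M : ℝ) * N) * (∑ p ∈ S i, ∑ q ∈ S i, |f p - f q|) := by ring
        _ ≤ _ := this
    exact le_of_mul_le_mul_left h6 hN'
  have hintra_le : ((M : ℝ)) * intra ≤ 2 * total := by
    have h7 : total = ∑ i ∈ range M, ∑ p ∈ S i, ∑ r ∈ U, |f p - f r| := by
      rw [htl, hU, sum_biUnion hpd]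
    rw [hin, h7, mul_sum, mul_sum]
    exact sum_le_sum fun i hi => hG i hi
  constructor
  · rw [hdecomp]; linarith
  · have : total - cross = intra := by rw [hdecomp]; ring
    rw [this]
    have hM1 : ((M : ℝ) - 1) * intra ≤ (M : ℝ) * intra := by
      nlinarith
    linarith

private lemma strip_excl (g : ℕ → ℝ) (M : ℕ) (hg : ∀ i < M, g i < g (i + 1)) :
    ∀ i < M, ∀ i' < M, i ≠ i' → ∀ x : ℝ,
      g i ≤ x → x < g (i + 1) → g i' ≤ x → x < g (i' + 1) → False := by
  intro i hi i' hi' hne x h1 h2 h3 h4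
  rcases Nat.lt_or_ge i i' with h | h
  · have := grid_mono g M hg (i + 1) i' (by omega) (by omega); linarith
  · have := grid_mono g M hg (i' + 1) i (by omega) (by omega); linarith

private lemma final_arith (mR a b ox oy la lb lo1 lo2 : ℝ)
    (hm : 2 < mR) (ha : 0 ≤ a) (hb : 0 ≤ b)
    (hx2 : (mR - 1) * (a - 2 * la) ≤ 2 * a)
    (hy2 : (mR - 1) * (b - 2 * lb) ≤ 2 * b)
    (hlin : la + lb ≤ lo1 + lo2)
    (hox : 2 * lo1 ≤ ox) (hoy : 2 * lo2 ≤ oy) :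
    ((a + b) / 2) * (1 - 1 / (mR - 2) - 2 / (mR - 1)) ≤ (ox + oy) / 2 := by
  have h1 : 0 < mR - 1 := by linarith
  have h2 : 0 < mR - 2 := by linarith
  have e1 : a - 2 * la ≤ (2 / (mR - 1)) * a := by
    rw [div_mul_eq_mul_div, le_div_iff₀ h1]; nlinarith [hx2]
  have e2 : b - 2 * lb ≤ (2 / (mR - 1)) * b := by
    rw [div_mul_eq_mul_div, le_div_iff₀ h1]; nlinarith [hy2]
  have hWO : a + b - (2 / (mR - 1)) * (a + b) ≤ ox + oy := by nlinarith [e1, e2]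
  have hab : 0 ≤ a + b := by linarith
  have hc : 1 - 1 / (mR - 2) - 2 / (mR - 1) ≤ 1 - 2 / (mR - 1) := by
    have : 0 < 1 / (mR - 2) := by positivity
    linarith
  have h3 : (a + b) * (1 - 1 / (mR - 2) - 2 / (mR - 1)) ≤ (a + b) * (1 - 2 / (mR - 1)) :=
    mul_le_mul_of_nonneg_left hc hab
  have h4 : (a + b) * (1 - 2 / (mR - 1)) = a + b - (2 / (mR - 1)) * (a + b) := by ring
  linarith

/-- The PTAS guarantee: the set `A = ∪_{i,j} A_{ij}` produced by the PTAS selection rule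
satisfies `w(A)·(1 − 1/(m−2) − 2/(m−1)) ≤ w(OPT)`. -/
theorem ptas_guarantee
    (m k : ℕ) (hm : 2 < m) (hk : 0 < k) (hmk : m ∣ k)
    (P : Finset (Fin 2 → ℝ))
    (hPx : ∀ p ∈ P, ∀ q ∈ P, p ≠ q → p 0 ≠ q 0)
    (hPy : ∀ p ∈ P, ∀ q ∈ P, p ≠ q → p 1 ≠ q 1)
    (ξ η : ℕ → ℝ)
    (hξ : ∀ i < m, ξ i < ξ (i + 1))
    (hη : ∀ j < m, η j < η (j + 1))
    (OPT : Finset (Fin 2 → ℝ)) (hOP : OPT ⊆ P) (hOcard : OPT.card = k)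
    (hOopt : ∀ T ⊆ P, T.card = k → w OPT ≤ w T)
    -- OPT is covered by the cells `C_{ij} = X_i ∩ Y_j`
    (hOcover : ∀ p ∈ OPT, ξ 0 ≤ p 0 ∧ p 0 < ξ m ∧ η 0 ≤ p 1 ∧ p 1 < η m)
    -- each vertical strip `X_i` and each horizontal strip `Y_j` contains exactly
    -- `k/m` points of OPT
    (hOX : ∀ i < m,
      (OPT.filter fun p => ξ i ≤ p 0 ∧ p 0 < ξ (i + 1)).card = k / m)
    (hOY : ∀ j < m,
      (OPT.filter fun p => η j ≤ p 1 ∧ p 1 < η (j + 1)).card = k / m)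
    (A : ℕ → ℕ → Finset (Fin 2 → ℝ))
    -- `A_{ij} ⊆ P ∩ C_{ij}` with `|A_{ij}| = k_{ij} = |OPT ∩ C_{ij}|` minimizes
    -- `Σ_{p ∈ A_{ij}} ⟨p, ∇_{ij}⟩` where `∇_{ij} = ((2i+1−m)k/m, (2j+1−m)k/m)`
    (hAsub : ∀ i < m, ∀ j < m,
      A i j ⊆ P.filter fun p =>
        (ξ i ≤ p 0 ∧ p 0 < ξ (i + 1)) ∧ (η j ≤ p 1 ∧ p 1 < η (j + 1)))
    (hAcard : ∀ i < m, ∀ j < m,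
      (A i j).card = (OPT.filter fun p =>
        (ξ i ≤ p 0 ∧ p 0 < ξ (i + 1)) ∧ (η j ≤ p 1 ∧ p 1 < η (j + 1))).card)
    (hAmin : ∀ i < m, ∀ j < m,
      ∀ B ⊆ (P.filter fun p =>
        (ξ i ≤ p 0 ∧ p 0 < ξ (i + 1)) ∧ (η j ≤ p 1 ∧ p 1 < η (j + 1))),
        B.card = (A i j).card →
        ∑ p ∈ A i j,
          (((2 * (i : ℝ) + 1 - m) * k / m) * p 0 +
           ((2 * (j : ℝ) + 1 - m) * k / m) * p 1) ≤
        ∑ p ∈ B,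
          (((2 * (i : ℝ) + 1 - m) * k / m) * p 0 +
           ((2 * (j : ℝ) + 1 - m) * k / m) * p 1)) :
    w ((Finset.range m).biUnion fun i => (Finset.range m).biUnion fun j => A i j) *
      (1 - 1 / ((m : ℝ) - 2) - 2 / ((m : ℝ) - 1)) ≤ w OPT := by
  classical
  set n := k / m with hn
  have hkmn : k = m * n := (Nat.mul_div_cancel' hmk).symm
  have hnpos : 0 < n := by
    rcases Nat.eq_zero_or_pos n with h | h
    · rw [h, Nat.mul_zero] at hkmn; omega
    · exact h
  have hmR : (2 : ℝ) < m := by exact_mod_cast hm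
  have hm0 : (m : ℝ) ≠ 0 := by linarith
  have hξex := strip_excl ξ m hξ
  have hηex := strip_excl η m hη
  have hξmono := grid_mono ξ m hξ
  -- membership facts for the cells of A
  have hAmem : ∀ i ∈ range m, ∀ j ∈ range m, ∀ p ∈ A i j,
      (ξ i ≤ p 0 ∧ p 0 < ξ (i + 1)) ∧ (η j ≤ p 1 ∧ p 1 < η (j + 1)) := by
    intro i hi j hj p hp
    exact (mem_filter.mp (hAsub i (mem_range.mp hi) j (mem_range.mp hj) hp)).2
  have hAdisj : ∀ i ∈ range m, ∀ j ∈ range m, ∀ i' ∈ range m, ∀ j' ∈ range m,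
      i ≠ i' ∨ j ≠ j' → Disjoint (A i j) (A i' j') := by
    intro i hi j hj i' hi' j' hj' hne
    rw [Finset.disjoint_left]
    intro p hp hp'
    have h1 := hAmem i hi j hj p hp
    have h2 := hAmem i' hi' j' hj' p hp'
    rcases hne with hne | hne
    · exact hξex i (mem_range.mp hi) i' (mem_range.mp hi') hne (p 0)
        h1.1.1 h1.1.2 h2.1.1 h2.1.2
    · exact hηex j (mem_range.mp hj) j' (mem_range.mp hj') hne (p 1)
        h1.2.1 h1.2.2 h2.2.1 h2.2.2
  have hOCdisj : ∀ i ∈ range m, ∀ j ∈ range m, ∀ i' ∈ range m, ∀ j' ∈ range m,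
      i ≠ i' ∨ j ≠ j' →
      Disjoint (OPT.filter fun p =>
          (ξ i ≤ p 0 ∧ p 0 < ξ (i + 1)) ∧ (η j ≤ p 1 ∧ p 1 < η (j + 1)))
        (OPT.filter fun p =>
          (ξ i' ≤ p 0 ∧ p 0 < ξ (i' + 1)) ∧ (η j' ≤ p 1 ∧ p 1 < η (j' + 1))) := by
    intro i hi j hj i' hi' j' hj' hne
    rw [Finset.disjoint_left]
    intro p hp hp'
    have h1 := (mem_filter.mp hp).2
    have h2 := (mem_filter.mp hp').2
    rcases hne with hne | hne
    · exact hξex i (mem_range.mp hi) i' (mem_range.mp hi') hne (p 0)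
        h1.1.1 h1.1.2 h2.1.1 h2.1.2
    · exact hηex j (mem_range.mp hj) j' (mem_range.mp hj') hne (p 1)
        h1.2.1 h1.2.2 h2.2.1 h2.2.2
  -- the strips of OPT are unions of cells
  have hOxU : ∀ i ∈ range m, (OPT.filter fun p => ξ i ≤ p 0 ∧ p 0 < ξ (i + 1))
      = (range m).biUnion (fun j => OPT.filter fun p =>
          (ξ i ≤ p 0 ∧ p 0 < ξ (i + 1)) ∧ (η j ≤ p 1 ∧ p 1 < η (j + 1))) := by
    intro i hi
    ext p
    simp only [mem_biUnion, mem_filter, mem_range]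
    constructor
    · rintro ⟨hpO, hx⟩
      obtain ⟨j, hj, h⟩ := exists_strip η (p 1) m (hOcover p hpO).2.2.1 (hOcover p hpO).2.2.2
      exact ⟨j, hj, hpO, hx, h⟩
    · rintro ⟨j, hj, hpO, hx, hy⟩
      exact ⟨hpO, hx⟩
  have hOyU : ∀ j ∈ range m, (OPT.filter fun p => η j ≤ p 1 ∧ p 1 < η (j + 1))
      = (range m).biUnion (fun i => OPT.filter fun p =>
          (ξ i ≤ p 0 ∧ p 0 < ξ (i + 1)) ∧ (η j ≤ p 1 ∧ p 1 < η (j + 1))) := by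
    intro j hj
    ext p
    simp only [mem_biUnion, mem_filter, mem_range]
    constructor
    · rintro ⟨hpO, hy⟩
      obtain ⟨i, hi, h⟩ := exists_strip ξ (p 0) m (hOcover p hpO).1 (hOcover p hpO).2.1
      exact ⟨i, hi, hpO, h, hy⟩
    · rintro ⟨i, hi, hpO, hx, hy⟩
      exact ⟨hpO, hy⟩
  have hOU : OPT = (range m).biUnion
      (fun i => OPT.filter fun p => ξ i ≤ p 0 ∧ p 0 < ξ (i + 1)) := by
    ext p
    simp only [mem_biUnion, mem_filter, mem_range]
    constructor
    · intro hpO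
      obtain ⟨i, hi, h⟩ := exists_strip ξ (p 0) m (hOcover p hpO).1 (hOcover p hpO).2.1
      exact ⟨i, hi, hpO, h⟩
    · rintro ⟨i, hi, hpO, h⟩
      exact hpO
  have hOU' : OPT = (range m).biUnion
      (fun j => OPT.filter fun p => η j ≤ p 1 ∧ p 1 < η (j + 1)) := by
    ext p
    simp only [mem_biUnion, mem_filter, mem_range]
    constructor
    · intro hpO
      obtain ⟨j, hj, h⟩ := exists_strip η (p 1) m (hOcover p hpO).2.2.1 (hOcover p hpO).2.2.2
      exact ⟨j, hj, hpO, h⟩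
    · rintro ⟨j, hj, hpO, h⟩
      exact hpO
  -- the x- and y-strips of A
  have hSxmem : ∀ i ∈ range m, ∀ p ∈ (range m).biUnion (fun j => A i j),
      ξ i ≤ p 0 ∧ p 0 < ξ (i + 1) := by
    intro i hi p hp
    obtain ⟨j, hj, hpj⟩ := mem_biUnion.mp hp
    exact (hAmem i hi j hj p hpj).1
  have hSymem : ∀ j ∈ range m, ∀ p ∈ (range m).biUnion (fun i => A i j),
      η j ≤ p 1 ∧ p 1 < η (j + 1) := by
    intro j hj p hp
    obtain ⟨i, hi, hpj⟩ := mem_biUnion.mp hp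
    exact (hAmem i hi j hj p hpj).2
  have hSxdisj : ∀ i ∈ range m, ∀ i' ∈ range m, i ≠ i' →
      Disjoint ((range m).biUnion fun j => A i j) ((range m).biUnion fun j => A i' j) := by
    intro i hi i' hi' hne
    rw [Finset.disjoint_left]
    intro p hp hp'
    exact hξex i (mem_range.mp hi) i' (mem_range.mp hi') hne (p 0)
      (hSxmem i hi p hp).1 (hSxmem i hi p hp).2 (hSxmem i' hi' p hp').1 (hSxmem i' hi' p hp').2
  have hSydisj : ∀ j ∈ range m, ∀ j' ∈ range m, j ≠ j' →
      Disjoint ((range m).biUnion fun i => A i j) ((range m).biUnion fun i => A i j') := by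
    intro j hj j' hj' hne
    rw [Finset.disjoint_left]
    intro p hp hp'
    exact hηex j (mem_range.mp hj) j' (mem_range.mp hj') hne (p 1)
      (hSymem j hj p hp).1 (hSymem j hj p hp).2 (hSymem j' hj' p hp').1 (hSymem j' hj' p hp').2
  have hSxcard : ∀ i ∈ range m, ((range m).biUnion fun j => A i j).card = n := by
    intro i hi
    rw [card_biUnion (fun j hj j' hj' hne => hAdisj i hi j hj i hi j' hj' (Or.inr hne))]
    have h1 : ∀ j ∈ range m, (A i j).card
        = (OPT.filter fun p =>
            (ξ i ≤ p 0 ∧ p 0 < ξ (i + 1)) ∧ (η j ≤ p 1 ∧ p 1 < η (j + 1))).card :=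
      fun j hj => hAcard i (mem_range.mp hi) j (mem_range.mp hj)
    rw [sum_congr rfl h1,
      ← card_biUnion (fun j hj j' hj' hne => hOCdisj i hi j hj i hi j' hj' (Or.inr hne)),
      ← hOxU i hi]
    exact hOX i (mem_range.mp hi)
  have hSycard : ∀ j ∈ range m, ((range m).biUnion fun i => A i j).card = n := by
    intro j hj
    rw [card_biUnion (fun i hi i' hi' hne => hAdisj i hi j hj i' hi' j hj (Or.inl hne))]
    have h1 : ∀ i ∈ range m, (A i j).card
        = (OPT.filter fun p =>
            (ξ i ≤ p 0 ∧ p 0 < ξ (i + 1)) ∧ (η j ≤ p 1 ∧ p 1 < η (j + 1))).card :=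
      fun i hi => hAcard i (mem_range.mp hi) j (mem_range.mp hj)
    rw [sum_congr rfl h1,
      ← card_biUnion (fun i hi i' hi' hne => hOCdisj i hi j hj i' hi' j hj (Or.inl hne)),
      ← hOyU j hj]
    exact hOY j (mem_range.mp hj)
  have hSxsep : ∀ i ∈ range m, ∀ i' ∈ range m, i < i' →
      ∀ p ∈ (range m).biUnion (fun j => A i j), ∀ q ∈ (range m).biUnion (fun j => A i' j),
      (fun p : Fin 2 → ℝ => p 0) p ≤ (fun p : Fin 2 → ℝ => p 0) q := by
    intro i hi i' hi' hlt p hp q hq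
    have h1 := hSxmem i hi p hp
    have h2 := hSxmem i' hi' q hq
    have h3 := grid_mono ξ m hξ (i + 1) i' hlt (Nat.le_of_lt (mem_range.mp hi'))
    show p 0 ≤ q 0
    linarith [h1.2, h2.1]
  have hSysep : ∀ j ∈ range m, ∀ j' ∈ range m, j < j' →
      ∀ p ∈ (range m).biUnion (fun i => A i j), ∀ q ∈ (range m).biUnion (fun i => A i j'),
      (fun p : Fin 2 → ℝ => p 1) p ≤ (fun p : Fin 2 → ℝ => p 1) q := by
    intro j hj j' hj' hlt p hp q hq
    have h1 := hSymem j hj p hp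
    have h2 := hSymem j' hj' q hq
    have h3 := grid_mono η m hη (j + 1) j' hlt (Nat.le_of_lt (mem_range.mp hj'))
    show p 1 ≤ q 1
    linarith [h1.2, h2.1]
  -- strips of OPT
  have hOxdisj : ∀ i ∈ range m, ∀ i' ∈ range m, i ≠ i' →
      Disjoint (OPT.filter fun p => ξ i ≤ p 0 ∧ p 0 < ξ (i + 1))
        (OPT.filter fun p => ξ i' ≤ p 0 ∧ p 0 < ξ (i' + 1)) := by
    intro i hi i' hi' hne
    rw [Finset.disjoint_left]
    intro p hp hp'
    exact hξex i (mem_range.mp hi) i' (mem_range.mp hi') hne (p 0)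
      (mem_filter.mp hp).2.1 (mem_filter.mp hp).2.2
      (mem_filter.mp hp').2.1 (mem_filter.mp hp').2.2
  have hOydisj : ∀ j ∈ range m, ∀ j' ∈ range m, j ≠ j' →
      Disjoint (OPT.filter fun p => η j ≤ p 1 ∧ p 1 < η (j + 1))
        (OPT.filter fun p => η j' ≤ p 1 ∧ p 1 < η (j' + 1)) := by
    intro j hj j' hj' hne
    rw [Finset.disjoint_left]
    intro p hp hp'
    exact hηex j (mem_range.mp hj) j' (mem_range.mp hj') hne (p 1)
      (mem_filter.mp hp).2.1 (mem_filter.mp hp).2.2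
      (mem_filter.mp hp').2.1 (mem_filter.mp hp').2.2
  have hOxcard : ∀ i ∈ range m,
      (OPT.filter fun p => ξ i ≤ p 0 ∧ p 0 < ξ (i + 1)).card = n :=
    fun i hi => hOX i (mem_range.mp hi)
  have hOycard : ∀ j ∈ range m,
      (OPT.filter fun p => η j ≤ p 1 ∧ p 1 < η (j + 1)).card = n :=
    fun j hj => hOY j (mem_range.mp hj)
  have hOxsep : ∀ i ∈ range m, ∀ i' ∈ range m, i < i' →
      ∀ p ∈ OPT.filter (fun p => ξ i ≤ p 0 ∧ p 0 < ξ (i + 1)),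
      ∀ q ∈ OPT.filter (fun p => ξ i' ≤ p 0 ∧ p 0 < ξ (i' + 1)),
      (fun p : Fin 2 → ℝ => p 0) p ≤ (fun p : Fin 2 → ℝ => p 0) q := by
    intro i hi i' hi' hlt p hp q hq
    have h1 := (mem_filter.mp hp).2
    have h2 := (mem_filter.mp hq).2
    have h3 := grid_mono ξ m hξ (i + 1) i' hlt (Nat.le_of_lt (mem_range.mp hi'))
    show p 0 ≤ q 0
    linarith [h1.2, h2.1]
  have hOysep : ∀ j ∈ range m, ∀ j' ∈ range m, j < j' →
      ∀ p ∈ OPT.filter (fun p => η j ≤ p 1 ∧ p 1 < η (j + 1)),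
      ∀ q ∈ OPT.filter (fun p => η j' ≤ p 1 ∧ p 1 < η (j' + 1)),
      (fun p : Fin 2 → ℝ => p 1) p ≤ (fun p : Fin 2 → ℝ => p 1) q := by
    intro j hj j' hj' hlt p hp q hq
    have h1 := (mem_filter.mp hp).2
    have h2 := (mem_filter.mp hq).2
    have h3 := grid_mono η m hη (j + 1) j' hlt (Nat.le_of_lt (mem_range.mp hj'))
    show p 1 ≤ q 1
    linarith [h1.2, h2.1]
  -- apply the abstract strip lemma
  obtain ⟨hx1, hx2⟩ := strip_main m n hm hnpos (fun i => (range m).biUnion fun j => A i j)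
    hSxdisj hSxcard (fun p => p 0) hSxsep
  obtain ⟨hy1, hy2⟩ := strip_main m n hm hnpos (fun j => (range m).biUnion fun i => A i j)
    hSydisj hSycard (fun p => p 1) hSysep
  obtain ⟨hox, -⟩ := strip_main m n hm hnpos
    (fun i => OPT.filter fun p => ξ i ≤ p 0 ∧ p 0 < ξ (i + 1))
    hOxdisj hOxcard (fun p => p 0) hOxsep
  obtain ⟨hoy, -⟩ := strip_main m n hm hnpos
    (fun j => OPT.filter fun p => η j ≤ p 1 ∧ p 1 < η (j + 1))
    hOydisj hOycard (fun p => p 1) hOysep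
  rw [← hOU] at hox
  rw [← hOU'] at hoy
  have hswap : ((range m).biUnion fun j => (range m).biUnion fun i => A i j)
      = ((range m).biUnion fun i => (range m).biUnion fun j => A i j) := by
    ext p
    simp only [mem_biUnion]
    constructor
    · rintro ⟨j, hj, i, hi, hp⟩
      exact ⟨i, hi, j, hj, hp⟩
    · rintro ⟨i, hi, j, hj, hp⟩
      exact ⟨j, hj, i, hi, hp⟩
  rw [hswap] at hy1 hy2
  -- the linear terms comparison
  have hcoef : ∀ (a : ℕ) (x : ℝ), ((2 * (a : ℝ) + 1 - m) * k / m) * x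
      = ((n : ℝ) * (2 * (a : ℝ) + 1 - m)) * x := by
    intro a x
    rw [hkmn]
    push_cast
    field_simp
  have hlin : (∑ i ∈ range m, ∑ p ∈ (range m).biUnion (fun j => A i j),
        ((n : ℝ) * (2 * (i : ℝ) + 1 - m)) * p 0)
      + (∑ j ∈ range m, ∑ p ∈ (range m).biUnion (fun i => A i j),
        ((n : ℝ) * (2 * (j : ℝ) + 1 - m)) * p 1)
      ≤ (∑ i ∈ range m, ∑ p ∈ OPT.filter (fun p => ξ i ≤ p 0 ∧ p 0 < ξ (i + 1)),
        ((n : ℝ) * (2 * (i : ℝ) + 1 - m)) * p 0)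
        + (∑ j ∈ range m, ∑ p ∈ OPT.filter (fun p => η j ≤ p 1 ∧ p 1 < η (j + 1)),
        ((n : ℝ) * (2 * (j : ℝ) + 1 - m)) * p 1) := by
    have ha1 : ∀ i ∈ range m, (∑ p ∈ (range m).biUnion (fun j => A i j),
        ((n : ℝ) * (2 * (i : ℝ) + 1 - m)) * p 0)
        = ∑ j ∈ range m, ∑ p ∈ A i j, ((n : ℝ) * (2 * (i : ℝ) + 1 - m)) * p 0 := by
      intro i hi
      exact sum_biUnion (fun j hj j' hj' hne =>
        hAdisj i hi j (by simpa using hj) i hi j' (by simpa using hj') (Or.inr hne))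
    have ha2 : ∀ j ∈ range m, (∑ p ∈ (range m).biUnion (fun i => A i j),
        ((n : ℝ) * (2 * (j : ℝ) + 1 - m)) * p 1)
        = ∑ i ∈ range m, ∑ p ∈ A i j, ((n : ℝ) * (2 * (j : ℝ) + 1 - m)) * p 1 := by
      intro j hj
      exact sum_biUnion (fun i hi i' hi' hne =>
        hAdisj i (by simpa using hi) j hj i' (by simpa using hi') j hj (Or.inl hne))
    have ho1 : ∀ i ∈ range m, (∑ p ∈ OPT.filter (fun p => ξ i ≤ p 0 ∧ p 0 < ξ (i + 1)),
        ((n : ℝ) * (2 * (i : ℝ) + 1 - m)) * p 0)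
        = ∑ j ∈ range m, ∑ p ∈ OPT.filter (fun p =>
            (ξ i ≤ p 0 ∧ p 0 < ξ (i + 1)) ∧ (η j ≤ p 1 ∧ p 1 < η (j + 1))),
          ((n : ℝ) * (2 * (i : ℝ) + 1 - m)) * p 0 := by
      intro i hi
      rw [hOxU i hi]
      exact sum_biUnion (fun j hj j' hj' hne =>
        hOCdisj i hi j (by simpa using hj) i hi j' (by simpa using hj') (Or.inr hne))
    have ho2 : ∀ j ∈ range m, (∑ p ∈ OPT.filter (fun p => η j ≤ p 1 ∧ p 1 < η (j + 1)),
        ((n : ℝ) * (2 * (j : ℝ) + 1 - m)) * p 1)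
        = ∑ i ∈ range m, ∑ p ∈ OPT.filter (fun p =>
            (ξ i ≤ p 0 ∧ p 0 < ξ (i + 1)) ∧ (η j ≤ p 1 ∧ p 1 < η (j + 1))),
          ((n : ℝ) * (2 * (j : ℝ) + 1 - m)) * p 1 := by
      intro j hj
      rw [hOyU j hj]
      exact sum_biUnion (fun i hi i' hi' hne =>
        hOCdisj i (by simpa using hi) j hj i' (by simpa using hi') j hj (Or.inl hne))
    rw [sum_congr rfl ha1, sum_congr rfl ha2, sum_congr rfl ho1, sum_congr rfl ho2]
    rw [sum_comm (f := fun j i => ∑ p ∈ A i j, ((n : ℝ) * (2 * (j : ℝ) + 1 - m)) * p 1)]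
    rw [sum_comm (f := fun j i => ∑ p ∈ OPT.filter (fun p =>
      (ξ i ≤ p 0 ∧ p 0 < ξ (i + 1)) ∧ (η j ≤ p 1 ∧ p 1 < η (j + 1))),
      ((n : ℝ) * (2 * (j : ℝ) + 1 - m)) * p 1)]
    rw [← sum_add_distrib, ← sum_add_distrib]
    refine sum_le_sum fun i hi => ?_
    rw [← sum_add_distrib, ← sum_add_distrib]
    refine sum_le_sum fun j hj => ?_
    rw [← sum_add_distrib, ← sum_add_distrib]
    have hmin := hAmin i (mem_range.mp hi) j (mem_range.mp hj)
      (OPT.filter fun p =>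
        (ξ i ≤ p 0 ∧ p 0 < ξ (i + 1)) ∧ (η j ≤ p 1 ∧ p 1 < η (j + 1)))
      (filter_subset_filter _ hOP)
      (hAcard i (mem_range.mp hi) j (mem_range.mp hj)).symm
    have e1 : ∀ S : Finset (Fin 2 → ℝ),
        (∑ p ∈ S, (((2 * (i : ℝ) + 1 - m) * k / m) * p 0
            + ((2 * (j : ℝ) + 1 - m) * k / m) * p 1))
        = ∑ p ∈ S, (((n : ℝ) * (2 * (i : ℝ) + 1 - m)) * p 0
            + ((n : ℝ) * (2 * (j : ℝ) + 1 - m)) * p 1) :=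
      fun S => sum_congr rfl fun p _ => by rw [hcoef i (p 0), hcoef j (p 1)]
    rw [e1, e1] at hmin
    exact hmin
  -- split the distances into coordinates
  have hWsplit : ∀ S : Finset (Fin 2 → ℝ), (∑ p ∈ S, ∑ q ∈ S, dist1 p q)
      = (∑ p ∈ S, ∑ q ∈ S, |p 0 - q 0|) + (∑ p ∈ S, ∑ q ∈ S, |p 1 - q 1|) := by
    intro S
    rw [← sum_add_distrib]
    refine sum_congr rfl fun p _ => ?_
    rw [← sum_add_distrib]
    refine sum_congr rfl fun q _ => ?_
    simp [dist1, Fin.sum_univ_two]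
  have hax : (0 : ℝ) ≤ ∑ p ∈ ((range m).biUnion fun i => (range m).biUnion fun j => A i j),
      ∑ q ∈ ((range m).biUnion fun i => (range m).biUnion fun j => A i j), |p 0 - q 0| :=
    sum_nonneg fun p _ => sum_nonneg fun q _ => abs_nonneg _
  have hay : (0 : ℝ) ≤ ∑ p ∈ ((range m).biUnion fun i => (range m).biUnion fun j => A i j),
      ∑ q ∈ ((range m).biUnion fun i => (range m).biUnion fun j => A i j), |p 1 - q 1| :=
    sum_nonneg fun p _ => sum_nonneg fun q _ => abs_nonneg _
  unfold w
  rw [hWsplit, hWsplit]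
  exact final_arith (m : ℝ) _ _ _ _ _ _ _ _ hmR hax hay hx2 hy2 hlin hox hoy
end

section
/- Let S be a finite set of points in ℝ² partitioned into cells S = ∪_{0≤i,j<m} S_{ij}, where the partition is induced by strips: there are reals ξ₀ ≤ … ≤ ξ_m and η₀ ≤ … ≤ η_m such that every p ∈ S_{ij} satisfies ξ_i ≤ p_x ≤ ξ_{i+1} and η_j ≤ p_y ≤ η_{j+1}, and points in different vertical strips are separated in x (if p ∈ S_{ij}, q ∈ S_{i'j'} with i < i' then p_x ≤ q_x) and similarly for horizontal strips in y. Write S_{i·} = ∪_j S_{ij} and S_{·j} = ∪_i S_{ij}. Then w(S) = (1/2)·Σ_{i,j} [ w_x(S_{ij}, S∖S_{i·}) + w_y(S_{ij}, S∖S_{·j}) ] + Σ_i w_x(S_{i·}) + Σ_j w_y(S_{·j}); i.e., the weight of S decomposes into cross-strip distances plus intra-strip x- and y-weights. -/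
open Finset
open scoped Classical

/-- The sum of x-coordinate distances over all unordered pairs of distinct points of `S`. -/
noncomputable def wx (S : Finset (Fin 2 → ℝ)) : ℝ := (∑ p ∈ S, ∑ q ∈ S, |p 0 - q 0|) / 2

/-- The sum of y-coordinate distances over all unordered pairs of distinct points of `S`. -/
noncomputable def wy (S : Finset (Fin 2 → ℝ)) : ℝ := (∑ p ∈ S, ∑ q ∈ S, |p 1 - q 1|) / 2

/-- `w_x(S,T) = Σ_{p∈S, q∈T} |p_x − q_x|` (sum over ordered pairs). -/
noncomputable def wxp (S T : Finset (Fin 2 → ℝ)) : ℝ := ∑ p ∈ S, ∑ q ∈ T, |p 0 - q 0|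

/-- `w_y(S,T) = Σ_{p∈S, q∈T} |p_y − q_y|` (sum over ordered pairs). -/
noncomputable def wyp (S T : Finset (Fin 2 → ℝ)) : ℝ := ∑ p ∈ S, ∑ q ∈ T, |p 1 - q 1|

/-- Auxiliary: splitting a double sum over a partitioned set into intra- and cross-block
parts. -/
lemma sum_split_aux {α : Type*} [DecidableEq α] (m : ℕ) (R : ℕ → Finset α) (S : Finset α)
    (hS : S = (Finset.range m).biUnion R)
    (hd : ∀ i ∈ Finset.range m, ∀ i' ∈ Finset.range m, i ≠ i' → Disjoint (R i) (R i'))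
    (d : α → α → ℝ) :
    (∑ p ∈ S, ∑ q ∈ S, d p q) / 2 =
      (1 / 2) * ∑ i ∈ Finset.range m, ∑ p ∈ R i, ∑ q ∈ S \ R i, d p q
      + ∑ i ∈ Finset.range m, (∑ p ∈ R i, ∑ q ∈ R i, d p q) / 2 := by
  have hsub : ∀ i ∈ Finset.range m, R i ⊆ S := fun i hi =>
    hS ▸ Finset.subset_biUnion_of_mem R hi
  have hpd : Set.PairwiseDisjoint (↑(Finset.range m)) R := by
    intro i hi i' hi' hne
    exact hd i (by simpa using hi) i' (by simpa using hi') hne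
  have h1 : (∑ p ∈ S, ∑ q ∈ S, d p q)
      = ∑ i ∈ Finset.range m, ∑ p ∈ R i, ∑ q ∈ S, d p q := by
    rw [hS]
    exact Finset.sum_biUnion hpd
  have h2 : ∀ i ∈ Finset.range m, ∑ p ∈ R i, ∑ q ∈ S, d p q
      = (∑ p ∈ R i, ∑ q ∈ S \ R i, d p q) + ∑ p ∈ R i, ∑ q ∈ R i, d p q := by
    intro i hi
    rw [← Finset.sum_add_distrib]
    refine Finset.sum_congr rfl fun p _ => ?_
    rw [← Finset.sum_sdiff (hsub i hi)]
  rw [h1, Finset.sum_congr rfl h2, Finset.sum_add_distrib, add_div, ← Finset.sum_div]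
  ring

/-- Decomposition of the weight of a set partitioned into cells by strips: the weight of
`S` equals the cross-strip distances plus the intra-strip x- and y-weights. -/
theorem weight_decomposition
    (m : ℕ) (hm : 0 < m)
    (Sc : ℕ → ℕ → Finset (Fin 2 → ℝ)) (ξ η : ℕ → ℝ)
    (hξ : ∀ i < m, ξ i ≤ ξ (i + 1))
    (hη : ∀ j < m, η j ≤ η (j + 1))
    (S : Finset (Fin 2 → ℝ))
    (hunion : S = (Finset.range m).biUnion fun i =>
      (Finset.range m).biUnion fun j => Sc i j)
    (hdisj : ∀ i < m, ∀ j < m, ∀ i' < m, ∀ j' < m,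
      (i, j) ≠ (i', j') → Disjoint (Sc i j) (Sc i' j'))
    (hbound : ∀ i < m, ∀ j < m, ∀ p ∈ Sc i j,
      (ξ i ≤ p 0 ∧ p 0 ≤ ξ (i + 1)) ∧ (η j ≤ p 1 ∧ p 1 ≤ η (j + 1)))
    (hsepx : ∀ i < m, ∀ j < m, ∀ i' < m, ∀ j' < m, i < i' →
      ∀ p ∈ Sc i j, ∀ q ∈ Sc i' j', p 0 ≤ q 0)
    (hsepy : ∀ i < m, ∀ j < m, ∀ i' < m, ∀ j' < m, j < j' →
      ∀ p ∈ Sc i j, ∀ q ∈ Sc i' j', p 1 ≤ q 1) :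
    w S =
      (1 / 2) * ∑ i ∈ Finset.range m, ∑ j ∈ Finset.range m,
        (wxp (Sc i j) (S \ ((Finset.range m).biUnion fun j' => Sc i j')) +
         wyp (Sc i j) (S \ ((Finset.range m).biUnion fun i' => Sc i' j))) +
      ∑ i ∈ Finset.range m, wx ((Finset.range m).biUnion fun j' => Sc i j') +
      ∑ j ∈ Finset.range m, wy ((Finset.range m).biUnion fun i' => Sc i' j) := by
  classical
  set R : ℕ → Finset (Fin 2 → ℝ) := fun i => (Finset.range m).biUnion fun j => Sc i j with hR
  set C : ℕ → Finset (Fin 2 → ℝ) := fun j => (Finset.range m).biUnion fun i => Sc i j with hC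
  -- disjointness of the rows
  have hRd : ∀ i ∈ Finset.range m, ∀ i' ∈ Finset.range m, i ≠ i' → Disjoint (R i) (R i') := by
    intro i hi i' hi' hne
    rw [Finset.mem_range] at hi hi'
    simp only [hR, Finset.disjoint_biUnion_left, Finset.disjoint_biUnion_right]
    intro j hj j' hj'
    rw [Finset.mem_range] at hj hj'
    exact hdisj i hi j' hj' i' hi' j hj
      (by simp only [ne_eq, Prod.mk.injEq, not_and]; exact fun h _ => absurd h hne)
  have hCd : ∀ j ∈ Finset.range m, ∀ j' ∈ Finset.range m, j ≠ j' → Disjoint (C j) (C j') := by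
    intro j hj j' hj' hne
    rw [Finset.mem_range] at hj hj'
    simp only [hC, Finset.disjoint_biUnion_left, Finset.disjoint_biUnion_right]
    intro i hi i' hi'
    rw [Finset.mem_range] at hi hi'
    exact hdisj i' hi' j hj i hi j' hj'
      (by simp only [ne_eq, Prod.mk.injEq, not_and]; exact fun _ h => absurd h hne)
  have hSR : S = (Finset.range m).biUnion R := hunion
  have hSC : S = (Finset.range m).biUnion C := by
    rw [hunion]
    ext x
    simp only [Finset.mem_biUnion, hR, hC]
    constructor
    · rintro ⟨i, hi, j, hj, hx⟩; exact ⟨j, hj, i, hi, hx⟩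
    · rintro ⟨j, hj, i, hi, hx⟩; exact ⟨i, hi, j, hj, hx⟩
  -- splitting by rows / columns
  have hx := sum_split_aux m R S hSR hRd (fun p q => |p 0 - q 0|)
  have hy := sum_split_aux m C S hSC hCd (fun p q => |p 1 - q 1|)
  -- intra-cell disjointness within a row / column
  have hrow : ∀ i ∈ Finset.range m, ∀ T,
      (∑ p ∈ R i, ∑ q ∈ T, |p 0 - q 0|) = ∑ j ∈ Finset.range m, wxp (Sc i j) T := by
    intro i hi T
    rw [Finset.mem_range] at hi
    refine Finset.sum_biUnion ?_
    intro j hj j' hj' hne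
    simp only [Finset.coe_range, Set.mem_Iio] at hj hj'
    exact hdisj i hi j hj i hi j' hj' (by simp [Prod.ext_iff, hne])
  have hcol : ∀ j ∈ Finset.range m, ∀ T,
      (∑ p ∈ C j, ∑ q ∈ T, |p 1 - q 1|) = ∑ i ∈ Finset.range m, wyp (Sc i j) T := by
    intro j hj T
    rw [Finset.mem_range] at hj
    refine Finset.sum_biUnion ?_
    intro i hi i' hi' hne
    simp only [Finset.coe_range, Set.mem_Iio] at hi hi'
    exact hdisj i hi j hj i' hi' j hj (by simp [Prod.ext_iff, hne])
  have hw : w S = (∑ p ∈ S, ∑ q ∈ S, |p 0 - q 0|) / 2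
      + (∑ p ∈ S, ∑ q ∈ S, |p 1 - q 1|) / 2 := by
    unfold w dist1
    rw [← add_div, ← Finset.sum_add_distrib]
    congr 1
    refine Finset.sum_congr rfl fun p _ => ?_
    rw [← Finset.sum_add_distrib]
    refine Finset.sum_congr rfl fun q _ => ?_
    simp [Fin.sum_univ_two]
  rw [hw, hx, hy]
  have e1 : ∑ i ∈ Finset.range m, ∑ p ∈ R i, ∑ q ∈ S \ R i, |p 0 - q 0|
      = ∑ i ∈ Finset.range m, ∑ j ∈ Finset.range m, wxp (Sc i j) (S \ R i) :=
    Finset.sum_congr rfl fun i hi => hrow i hi (S \ R i)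
  have e2 : ∑ j ∈ Finset.range m, ∑ p ∈ C j, ∑ q ∈ S \ C j, |p 1 - q 1|
      = ∑ i ∈ Finset.range m, ∑ j ∈ Finset.range m, wyp (Sc i j) (S \ C j) := by
    rw [Finset.sum_comm]
    exact Finset.sum_congr rfl fun j hj => hcol j hj (S \ C j)
  rw [e1, e2]
  have e3 : ∑ i ∈ Finset.range m, ∑ j ∈ Finset.range m,
      (wxp (Sc i j) (S \ R i) + wyp (Sc i j) (S \ C j))
      = (∑ i ∈ Finset.range m, ∑ j ∈ Finset.range m, wxp (Sc i j) (S \ R i))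
      + ∑ i ∈ Finset.range m, ∑ j ∈ Finset.range m, wyp (Sc i j) (S \ C j) := by
    simp [Finset.sum_add_distrib]
  have e4 : ∀ i, wx (R i) = (∑ p ∈ R i, ∑ q ∈ R i, |p 0 - q 0|) / 2 := fun i => rfl
  have e5 : ∀ j, wy (C j) = (∑ p ∈ C j, ∑ q ∈ C j, |p 1 - q 1|) / 2 := fun j => rfl
  simp only [hR, hC] at e3 ⊢
  rw [e3]
  unfold wx wy
  ring
end
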